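/- arXiv:1405.4712 — 9 statements merged into one kernel-verified Lean document; each statement's English description precedes it below -/
import Mathlib

section
/- For every real number x, the power series ∑_{n≥0} (2n+1) x^{2n} / (4^n · n! · (1/2)_n) equals cosh x + x·sinh x, where (a)_n denotes the Pochhammer symbol. -/
noncomputable def lam (ν x : ℝ) : ℝ :=
  ∑' n : ℕ, (2 * (n : ℝ) + 1) * x ^ (2 * n) /
    ((4 : ℝ) ^ n * (n.factorial : ℝ) * (ascPochhammer ℝ n).eval (ν + 1))

lemma poch_half (n : ℕ) :
    (4 : ℝ) ^ n * (n.factorial : ℝ) * (ascPochhammer ℝ n).eval (1/2) = (2 * n).factorial := by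
  induction n with
  | zero => simp
  | succ n ih =>
    rw [ascPochhammer_succ_eval]
    have h2 : 2 * (n + 1) = 2 * n + 1 + 1 := by ring
    rw [h2, Nat.factorial_succ, Nat.factorial_succ, Nat.factorial_succ]
    rw [pow_succ]
    push_cast
    linear_combination (4 * ((n:ℝ) + 1) * (1/2 + (n:ℝ))) * ih

lemma summable_even (x : ℝ) : Summable (fun n : ℕ => x ^ (2 * n) / ((2 * n).factorial : ℝ)) := by
  exact (Real.summable_pow_div_factorial x).comp_injective
    (fun a b h => by omega)

lemma summable_odd (x : ℝ) : Summable (fun n : ℕ => x ^ (2 * n + 1) / ((2 * n + 1).factorial : ℝ)) := by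
  exact (Real.summable_pow_div_factorial x).comp_injective
    (fun a b h => by omega)

theorem stmt_1 (x : ℝ) : lam (-(1/2)) x = Real.cosh x + x * Real.sinh x := by
  have hnorm : (-(1/2) : ℝ) + 1 = 1/2 := by norm_num
  have hterm : ∀ n : ℕ, (2 * (n : ℝ) + 1) * x ^ (2 * n) /
      ((4 : ℝ) ^ n * (n.factorial : ℝ) * (ascPochhammer ℝ n).eval (-(1/2) + 1))
      = x ^ (2 * n) / ((2 * n).factorial : ℝ)
        + (2 * (n : ℝ)) * x ^ (2 * n) / ((2 * n).factorial : ℝ) := by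
    intro n
    rw [hnorm, poch_half]
    ring
  -- the second series
  set h : ℕ → ℝ := fun n => (2 * (n : ℝ)) * x ^ (2 * n) / ((2 * n).factorial : ℝ) with hh
  have hshift : ∀ k : ℕ, h (k + 1) = x * (x ^ (2 * k + 1) / ((2 * k + 1).factorial : ℝ)) := by
    intro k
    have : (2 * (k + 1)) = (2 * k + 1) + 1 := by omega
    rw [hh]
    simp only [this]
    rw [Nat.factorial_succ]
    push_cast
    field_simp
    ring
  have hsum_shift : Summable (fun k => h (k + 1)) := by
    simp only [hshift]
    exact (summable_odd x).mul_left x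
  have hsumh : Summable h := (summable_nat_add_iff 1).mp hsum_shift
  have htsumh : ∑' n, h n = x * Real.sinh x := by
    rw [Summable.tsum_eq_zero_add hsumh]
    simp only [hshift]
    rw [tsum_mul_left, ← Real.sinh_eq_tsum]
    simp [hh]
  unfold lam
  simp only [hterm]
  rw [Summable.tsum_add (summable_even x) hsumh, ← Real.cosh_eq_tsum, htsumh]
end

section
/- Let ν > -1 and define λ_ν(x) = ∑_{n≥0} (2n+1) x^{2n} / (4^n · n! · (ν+1)_n). If -1 < ν < 1/2, then λ_ν(x) > cosh x for all x > 0. -/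
lemma poch_lb (a : ℝ) (ha : 0 < a) (n : ℕ) :
    a * (n.factorial : ℝ) ≤ (ascPochhammer ℝ (n + 1)).eval a := by
  induction n with
  | zero => simp [ascPochhammer_succ_eval]
  | succ n ih =>
    rw [ascPochhammer_succ_eval]
    have h2 : ((n : ℝ) + 1) ≤ a + (n + 1 : ℕ) := by push_cast; linarith
    calc a * ((n + 1).factorial : ℝ) = (a * n.factorial) * ((n : ℝ) + 1) := by
          rw [Nat.factorial_succ]; push_cast; ring
      _ ≤ (ascPochhammer ℝ (n + 1)).eval a * (a + (n + 1 : ℕ)) := by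
          apply mul_le_mul ih h2 (by positivity)
          exact (ascPochhammer_pos _ _ ha).le

lemma key_ineq (a : ℝ) (ha : 0 < a) (ha2 : a ≤ 3 / 2) (n : ℕ) :
    (4 : ℝ) ^ n * (n.factorial : ℝ) * (ascPochhammer ℝ n).eval a
      ≤ ((2 * n + 1).factorial : ℝ) := by
  induction n with
  | zero => simp
  | succ n ih =>
    have hp := (ascPochhammer_pos n a ha).le
    have hfac : ((2 * (n + 1) + 1).factorial : ℝ)
        = ((2 * n + 1).factorial : ℝ) * ((2 * (n : ℝ) + 2) * (2 * (n : ℝ) + 3)) := by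
      have h : 2 * (n + 1) + 1 = ((2 * n + 1) + 1) + 1 := by ring
      rw [h, Nat.factorial_succ, Nat.factorial_succ]
      push_cast; ring
    have h4 : (4 : ℝ) * ((n : ℝ) + 1) * (a + n) ≤ (2 * (n : ℝ) + 2) * (2 * (n : ℝ) + 3) := by
      nlinarith [Nat.cast_nonneg (α := ℝ) n]
    rw [ascPochhammer_succ_eval, hfac]
    calc (4:ℝ) ^ (n+1) * (((n+1).factorial : ℝ)) * ((ascPochhammer ℝ n).eval a * (a + n))
        = ((4:ℝ) ^ n * n.factorial * (ascPochhammer ℝ n).eval a) * (4 * ((n:ℝ)+1) * (a + n)) := by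
          rw [Nat.factorial_succ]; push_cast; ring
      _ ≤ ((2 * n + 1).factorial : ℝ) * ((2 * (n : ℝ) + 2) * (2 * (n : ℝ) + 3)) := by
          have hna : (0:ℝ) ≤ a + n := by positivity
          apply mul_le_mul ih h4 (by positivity) (by positivity)

lemma lam_summable (a x : ℝ) (ha : 0 < a) :
    Summable (fun n : ℕ => (2 * (n : ℝ) + 1) * x ^ (2 * n) /
      ((4 : ℝ) ^ n * (n.factorial : ℝ) * (ascPochhammer ℝ n).eval a)) := by
  rw [← summable_nat_add_iff 1]
  have hmaj : Summable (fun n : ℕ => (x ^ 2 / a) * ((x ^ 2 / 4) ^ n / n.factorial)) :=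
    (Real.summable_pow_div_factorial (x ^ 2 / 4)).mul_left _
  refine Summable.of_nonneg_of_le (fun n => ?_) (fun n => ?_) hmaj
  all_goals have hp := ascPochhammer_pos (n + 1) a ha
  all_goals have hxe : (0:ℝ) ≤ x ^ (2 * (n + 1)) := by rw [pow_mul]; positivity
  · apply div_nonneg (mul_nonneg (by positivity) hxe) (by positivity)
  · have hlb := poch_lb a ha n
    have hf1 : (1 : ℝ) ≤ (n.factorial : ℝ) := by
      exact_mod_cast Nat.one_le_iff_ne_zero.mpr n.factorial_ne_zero
    have hfpos : (0 : ℝ) < (n.factorial : ℝ) := by positivity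
    have hRHS : (x ^ 2 / a) * ((x ^ 2 / 4) ^ n / n.factorial)
        = x ^ 2 * (x ^ 2) ^ n / (a * (4:ℝ) ^ n * n.factorial) := by
      rw [div_pow]; field_simp
    have hxpow : x ^ (2 * (n + 1)) = x ^ 2 * (x ^ 2) ^ n := by
      rw [pow_mul, pow_succ, mul_comm]
    rw [hRHS, hxpow, div_le_div_iff₀ (by positivity) (by positivity)]
    push_cast
    have den_lb : (2 * ((n:ℝ) + 1) + 1) * (a * (4:ℝ) ^ n * n.factorial)
        ≤ (4 : ℝ) ^ (n + 1) * ((n + 1).factorial : ℝ) * (ascPochhammer ℝ (n + 1)).eval a := by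
      have s1 : (2 * ((n:ℝ) + 1) + 1) ≤ 4 * ((n:ℝ) + 1) * n.factorial := by
        nlinarith [Nat.cast_nonneg (α := ℝ) n]
      calc (2 * ((n:ℝ) + 1) + 1) * (a * (4:ℝ) ^ n * n.factorial)
          ≤ (4 * ((n:ℝ) + 1) * n.factorial) * (a * (4:ℝ) ^ n * n.factorial) :=
            mul_le_mul_of_nonneg_right s1 (by positivity)
        _ = (4 * ((n:ℝ) + 1) * ((4:ℝ) ^ n * n.factorial)) * (a * n.factorial) := by ring
        _ ≤ (4 * ((n:ℝ) + 1) * ((4:ℝ) ^ n * n.factorial)) * (ascPochhammer ℝ (n + 1)).eval a :=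
            mul_le_mul_of_nonneg_left hlb (by positivity)
        _ = (4 : ℝ) ^ (n + 1) * ((n + 1).factorial : ℝ) * (ascPochhammer ℝ (n + 1)).eval a := by
            rw [Nat.factorial_succ]; push_cast; ring
    calc (2 * ((n:ℝ) + 1) + 1) * (x ^ 2 * (x ^ 2) ^ n) * (a * (4:ℝ) ^ n * n.factorial)
        = (x ^ 2 * (x ^ 2) ^ n) * ((2 * ((n:ℝ) + 1) + 1) * (a * (4:ℝ) ^ n * n.factorial)) := by
          ring
      _ ≤ (x ^ 2 * (x ^ 2) ^ n) *
          ((4 : ℝ) ^ (n + 1) * ((n + 1).factorial : ℝ) * (ascPochhammer ℝ (n + 1)).eval a) :=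
          mul_le_mul_of_nonneg_left den_lb (by positivity)

theorem stmt_2 (ν : ℝ) (hν₁ : -1 < ν) (hν₂ : ν < 1/2) (x : ℝ) (hx : 0 < x) :
    lam ν x > Real.cosh x := by
  have ha : 0 < ν + 1 := by linarith
  rw [lam, Real.cosh_eq_tsum]
  refine Summable.tsum_lt_tsum_of_nonneg (i := 1) (fun b => by positivity) (fun b => ?_) ?_
    (lam_summable (ν + 1) x ha)
  · have hp := ascPochhammer_pos b (ν + 1) ha
    have hfac : ((2 * b + 1).factorial : ℝ) = (2 * (b:ℝ) + 1) * ((2 * b).factorial : ℝ) := by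
      rw [Nat.factorial_succ]; push_cast; ring
    have hk := key_ineq (ν + 1) ha (by linarith) b
    rw [hfac] at hk
    rw [div_le_div_iff₀ (by positivity) (by positivity)]
    calc x ^ (2 * b) * ((4:ℝ) ^ b * b.factorial * (ascPochhammer ℝ b).eval (ν + 1))
        ≤ x ^ (2 * b) * ((2 * (b:ℝ) + 1) * ((2 * b).factorial : ℝ)) :=
          mul_le_mul_of_nonneg_left hk (by positivity)
      _ = (2 * (b:ℝ) + 1) * x ^ (2 * b) * ((2 * b).factorial : ℝ) := by ring
  · have hP1 : (ascPochhammer ℝ 1).eval (ν + 1) = ν + 1 := by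
      simp [ascPochhammer_succ_eval]
    have hx2 : (0:ℝ) < x ^ 2 := by positivity
    rw [hP1]
    norm_num
    rw [div_lt_div_iff₀ (by norm_num) (by positivity)]
    nlinarith [mul_pos hx2 (show (0:ℝ) < 3/2 - (ν + 1) by linarith)]
end

section
/- Let ν > -1/2 and define λ_ν(x) = ∑_{n≥0} (2n+1) x^{2n} / (4^n · n! · (ν+1)_n). Then λ_ν(x) < cosh x + x·sinh x for all x > 0. -/
lemma factorial_eq_poch (n : ℕ) :
    (((2 * n).factorial : ℝ)) = 4 ^ n * n.factorial * (ascPochhammer ℝ n).eval (1/2) := by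
  induction n with
  | zero => simp
  | succ n ih =>
    have h1 : 2 * (n + 1) = (2 * n + 1) + 1 := by ring
    rw [h1, Nat.factorial_succ, Nat.factorial_succ, ascPochhammer_succ_eval, Nat.factorial_succ]
    push_cast
    rw [ih]
    ring

lemma poch_mono (n : ℕ) {a b : ℝ} (ha : 0 < a) (hab : a ≤ b) :
    (ascPochhammer ℝ n).eval a ≤ (ascPochhammer ℝ n).eval b := by
  induction n with
  | zero => simp
  | succ n ih =>
    rw [ascPochhammer_succ_eval, ascPochhammer_succ_eval]
    have h1 : 0 < (ascPochhammer ℝ n).eval a := ascPochhammer_pos n a ha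
    have h2 : (0:ℝ) ≤ a + n := by positivity
    exact mul_le_mul ih (by linarith) h2 (le_trans h1.le ih)

theorem stmt_5 (ν : ℝ) (hν : -(1/2) < ν) (x : ℝ) (hx : 0 < x) :
    lam ν x < Real.cosh x + x * Real.sinh x := by
  have hν1 : (0:ℝ) < ν + 1 := by linarith
  have hhalf : (1:ℝ)/2 ≤ ν + 1 := by linarith
  set g : ℕ → ℝ := fun n => (2 * (n:ℝ) + 1) * x ^ (2 * n) / ((2 * n).factorial : ℝ) with hg
  set f : ℕ → ℝ := fun n => (2 * (n : ℝ) + 1) * x ^ (2 * n) /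
      ((4 : ℝ) ^ n * (n.factorial : ℝ) * (ascPochhammer ℝ n).eval (ν + 1)) with hf
  -- RHS equals ∑' g
  have hc : HasSum (fun n : ℕ => x ^ (2*n) / ((2*n).factorial : ℝ)) (Real.cosh x) :=
    Real.hasSum_cosh x
  have hs0 : HasSum (fun n : ℕ => x * (x ^ (2*n+1) / ((2*n+1).factorial : ℝ)))
      (x * Real.sinh x) := (Real.hasSum_sinh x).mul_left x
  set s : ℕ → ℝ := fun n => 2 * (n:ℝ) * x ^ (2*n) / ((2*n).factorial : ℝ) with hsdef
  have hshift : (fun n : ℕ => s (n+1)) = fun n : ℕ => x * (x ^ (2*n+1) / ((2*n+1).factorial : ℝ)) := by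
    funext n
    have h1 : 2 * (n + 1) = (2*n+1) + 1 := by ring
    simp only [hsdef, h1, Nat.factorial_succ]
    push_cast
    have h2 : ((2*n+1).factorial : ℝ) ≠ 0 := by positivity
    field_simp
    ring
  have hs1 : HasSum (fun n : ℕ => s (n+1)) (x * Real.sinh x) := hshift ▸ hs0
  have hs : HasSum s (x * Real.sinh x) := by
    have := (hasSum_nat_add_iff (f := s) 1).mp hs1
    simpa [hsdef] using this
  have hG : HasSum g (Real.cosh x + x * Real.sinh x) := by
    have := hc.add hs
    convert this using 2 with n
    simp only [hg, hsdef]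
    field_simp
    ring
  -- termwise comparison
  have hden : ∀ n : ℕ, (0:ℝ) < (4 : ℝ) ^ n * (n.factorial : ℝ) * (ascPochhammer ℝ n).eval (ν + 1) := by
    intro n
    have := ascPochhammer_pos n (ν+1) hν1
    positivity
  have hle : ∀ n, f n ≤ g n := by
    intro n
    simp only [hf, hg]
    have hFD : (((2*n).factorial : ℝ)) ≤ 4 ^ n * (n.factorial : ℝ) * (ascPochhammer ℝ n).eval (ν + 1) := by
      rw [factorial_eq_poch]
      have h1 : (0:ℝ) < 4 ^ n * (n.factorial : ℝ) := by positivity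
      exact mul_le_mul_of_nonneg_left (poch_mono n (by norm_num) hhalf) h1.le
    have hFpos : (0:ℝ) < ((2*n).factorial : ℝ) := by positivity
    exact div_le_div_of_nonneg_left (by positivity) hFpos hFD
  have hlt : f 1 < g 1 := by
    simp only [hf, hg]
    norm_num [ascPochhammer_one]
    rw [div_lt_div_iff₀ (by linarith) (by norm_num)]
    have hx2 : 0 < x^2 := by positivity
    nlinarith
  have hf0 : ∀ n, 0 ≤ f n := fun n => div_nonneg (by positivity) (hden n).le
  calc lam ν x = ∑' n, f n := rfl
    _ < ∑' n, g n := Summable.tsum_lt_tsum_of_nonneg hf0 hle hlt hG.summable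
    _ = Real.cosh x + x * Real.sinh x := hG.tsum_eq
end

section
/- Let μ > ν > -1 and define λ_ν(x) = ∑_{n≥0} (2n+1) x^{2n} / (4^n · n! · (ν+1)_n). Then the function x ↦ λ_ν(x)/λ_μ(x) is strictly increasing on (0,∞). -/
namespace Stmt6

noncomputable def P (ν : ℝ) (n : ℕ) : ℝ := (ascPochhammer ℝ n).eval (ν + 1)

lemma P_pos {ν : ℝ} (hν : -1 < ν) (n : ℕ) : 0 < P ν n :=
  ascPochhammer_pos n _ (by linarith)

lemma P_succ (ν : ℝ) (n : ℕ) : P ν (n + 1) = P ν n * (ν + 1 + n) := by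
  simp [P, ascPochhammer_succ_eval]

lemma P_key {ν μ : ℝ} (hν : -1 < ν) (hμν : ν ≤ μ) {m n : ℕ} (h : m ≤ n) :
    P ν n * P μ m ≤ P ν m * P μ n := by
  have hμ : -1 < μ := lt_of_lt_of_le hν hμν
  induction n, h using Nat.le_induction with
  | base => exact le_rfl
  | succ n hn ih =>
    have h1 := P_pos hν n
    have h2 := P_pos hμ n
    have h3 := P_pos hν m
    have h4 := P_pos hμ m
    have h5 : (0:ℝ) < ν + 1 + n := by
      have : (m:ℝ) ≤ n := by exact_mod_cast hn
      have : (0:ℝ) ≤ n := by positivity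
      linarith
    rw [P_succ, P_succ]
    nlinarith [mul_le_mul_of_nonneg_right ih (le_of_lt h5),
      mul_nonneg (mul_nonneg h3.le h2.le) (by linarith : (0:ℝ) ≤ μ - ν)]

noncomputable def term (ν x : ℝ) (n : ℕ) : ℝ :=
  (2 * (n : ℝ) + 1) * x ^ (2 * n) / ((4 : ℝ) ^ n * (n.factorial : ℝ) * P ν n)

lemma lam_eq (ν x : ℝ) : lam ν x = ∑' n, term ν x n := rfl

lemma pow_le_four_pow (n : ℕ) : (2 * (n:ℝ) + 1) ≤ 4 ^ n := by
  induction n with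
  | zero => norm_num
  | succ n ih =>
    have h4 : (1:ℝ) ≤ 4 ^ n := one_le_pow₀ (by norm_num)
    push_cast
    rw [pow_succ]
    nlinarith

lemma term_nonneg {ν : ℝ} (hν : -1 < ν) {x : ℝ} (hx : 0 ≤ x) (n : ℕ) :
    0 ≤ term ν x n := by
  have h1 := P_pos hν n
  have h2 : (0:ℝ) < n.factorial := by exact_mod_cast n.factorial_pos
  unfold term
  positivity

lemma P_mono_from {ν : ℝ} (hν : -1 < ν) {N n : ℕ} (hN : -ν ≤ (N:ℝ)) (h : N ≤ n) :
    P ν N ≤ P ν n := by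
  induction n, h using Nat.le_induction with
  | base => exact le_rfl
  | succ n hn ih =>
    have h1 := P_pos hν n
    have hn' : (N:ℝ) ≤ n := by exact_mod_cast hn
    have : (1:ℝ) ≤ ν + 1 + n := by linarith
    rw [P_succ]
    nlinarith

lemma summable_term {ν : ℝ} (hν : -1 < ν) (x : ℝ) : Summable (term ν x) := by
  set N := ⌈-ν⌉₊ with hNdef
  have hN : -ν ≤ (N:ℝ) := Nat.le_ceil _
  have hPN : 0 < P ν N := P_pos hν N
  rw [← summable_nat_add_iff N]
  have hg : Summable (fun n : ℕ => (x ^ 2) ^ (n + N) / ((n + N).factorial : ℝ) * (P ν N)⁻¹) :=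
    ((summable_nat_add_iff N).2 (Real.summable_pow_div_factorial (x ^ 2))).mul_right _
  refine Summable.of_nonneg_of_le (fun n => ?_) (fun n => ?_) hg
  · have h1 := P_pos hν (n + N)
    have h2 : (0:ℝ) < (n + N).factorial := by exact_mod_cast (n + N).factorial_pos
    have h3 : (0:ℝ) ≤ x ^ (2 * (n + N)) := by rw [pow_mul]; positivity
    unfold term
    positivity
  · set m := n + N with hm
    have hPm : P ν N ≤ P ν m := P_mono_from hν hN (by omega)
    have hPm' : 0 < P ν m := P_pos hν m
    have hfm : (0:ℝ) < m.factorial := by exact_mod_cast m.factorial_pos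
    have hx2 : x ^ (2 * m) = (x ^ 2) ^ m := by rw [pow_mul]
    have h4 : (0:ℝ) < 4 ^ m := by positivity
    calc term ν x m = (2 * (m : ℝ) + 1) * (x ^ 2) ^ m / ((4:ℝ) ^ m * m.factorial * P ν m) := by
          rw [term, hx2]
      _ ≤ (4:ℝ) ^ m * (x ^ 2) ^ m / ((4:ℝ) ^ m * m.factorial * P ν m) := by
          gcongr
          exact pow_le_four_pow m
      _ = (x ^ 2) ^ m / (m.factorial * P ν m) := by
          field_simp
      _ ≤ (x ^ 2) ^ m / (m.factorial * P ν N) := by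
          gcongr
      _ = (x ^ 2) ^ m / m.factorial * (P ν N)⁻¹ := by
          rw [div_mul_eq_div_div, div_eq_mul_inv]

lemma lam_pos {ν : ℝ} (hν : -1 < ν) {x : ℝ} (hx : 0 ≤ x) : 0 < lam ν x := by
  have h0 : term ν x 0 = 1 := by simp [term, P]
  have h1 : (1:ℝ) ≤ ∑' n, term ν x n := by
    calc (1:ℝ) = term ν x 0 := h0.symm
      _ ≤ ∑' n, term ν x n :=
        Summable.le_tsum (summable_term hν x) 0 (fun j _ => term_nonneg hν hx j)
  rw [lam_eq]
  linarith

lemma E_aux {ν μ x y : ℝ} (hν : -1 < ν) (hμν : ν ≤ μ) (hx : 0 < x) (hxy : x ≤ y)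
    {m n : ℕ} (hmn : m ≤ n) :
    0 ≤ (term ν y m * term μ x n - term ν x m * term μ y n) +
      (term ν y n * term μ x m - term ν x n * term μ y m) := by
  have hμ : -1 < μ := lt_of_lt_of_le hν hμν
  have hPνm := P_pos hν m
  have hPνn := P_pos hν n
  have hPμm := P_pos hμ m
  have hPμn := P_pos hμ n
  have hfm : ((m.factorial : ℝ)) ≠ 0 := by exact_mod_cast m.factorial_ne_zero
  have hfn : ((n.factorial : ℝ)) ≠ 0 := by exact_mod_cast n.factorial_ne_zero
  have h4m : ((4:ℝ) ^ m) ≠ 0 := by positivity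
  have h4n : ((4:ℝ) ^ n) ≠ 0 := by positivity
  have h1 : y ^ (2 * m) * x ^ (2 * n) ≤ x ^ (2 * m) * y ^ (2 * n) := by
    obtain ⟨k, rfl⟩ : ∃ k, n = m + k := ⟨n - m, by omega⟩
    have hy : (0:ℝ) < y := lt_of_lt_of_le hx hxy
    have hp : x ^ (2 * k) ≤ y ^ (2 * k) := pow_le_pow_left₀ hx.le hxy _
    calc y ^ (2 * m) * x ^ (2 * (m + k))
        = (x ^ (2 * m) * y ^ (2 * m)) * x ^ (2 * k) := by
          rw [Nat.mul_add, pow_add]; ring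
      _ ≤ (x ^ (2 * m) * y ^ (2 * m)) * y ^ (2 * k) := by
          apply mul_le_mul_of_nonneg_left hp; positivity
      _ = x ^ (2 * m) * y ^ (2 * (m + k)) := by
          rw [Nat.mul_add, pow_add]; ring
  have h2 : P ν n * P μ m ≤ P ν m * P μ n := P_key hν hμν hmn
  have key : (term ν y m * term μ x n - term ν x m * term μ y n) +
      (term ν y n * term μ x m - term ν x n * term μ y m)
      = ((2 * (m:ℝ) + 1) * (2 * (n:ℝ) + 1) / ((4:ℝ) ^ m * m.factorial * ((4:ℝ) ^ n * n.factorial)))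
        * ((x ^ (2 * m) * y ^ (2 * n) - y ^ (2 * m) * x ^ (2 * n))
          * (P ν m * P μ n - P ν n * P μ m))
        / (P ν m * P ν n * (P μ m * P μ n)) := by
    unfold term
    field_simp
    ring
  rw [key]
  have hC : (0:ℝ) ≤ (2 * (m:ℝ) + 1) * (2 * (n:ℝ) + 1) /
      ((4:ℝ) ^ m * m.factorial * ((4:ℝ) ^ n * n.factorial)) := by positivity
  have hq : (0:ℝ) ≤ (x ^ (2 * m) * y ^ (2 * n) - y ^ (2 * m) * x ^ (2 * n))
      * (P ν m * P μ n - P ν n * P μ m) :=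
    mul_nonneg (by linarith) (by linarith)
  have hd : (0:ℝ) < P ν m * P ν n * (P μ m * P μ n) := by positivity
  exact div_nonneg (mul_nonneg hC hq) hd.le

lemma E_nonneg {ν μ x y : ℝ} (hν : -1 < ν) (hμν : ν ≤ μ) (hx : 0 < x) (hxy : x ≤ y)
    (m n : ℕ) :
    0 ≤ (term ν y m * term μ x n - term ν x m * term μ y n) +
      (term ν y n * term μ x m - term ν x n * term μ y m) := by
  rcases le_total m n with h | h
  · exact E_aux hν hμν hx hxy h
  · have := E_aux hν hμν hx hxy h
    linarith

lemma E01_pos {ν μ x y : ℝ} (hν : -1 < ν) (hμν : ν < μ) (hx : 0 < x) (hxy : x < y) :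
    0 < (term ν y 0 * term μ x 1 - term ν x 0 * term μ y 1) +
      (term ν y 1 * term μ x 0 - term ν x 1 * term μ y 0) := by
  have hμ : -1 < μ := lt_trans hν hμν
  have hν1 : (0:ℝ) < ν + 1 := by linarith
  have hμ1 : (0:ℝ) < μ + 1 := by linarith
  have h0 : ∀ z : ℝ, term ν z 0 = 1 := by intro z; simp [term, P]
  have h0' : ∀ z : ℝ, term μ z 0 = 1 := by intro z; simp [term, P]
  have h1 : ∀ z : ℝ, term ν z 1 = 3 * z ^ 2 / (4 * (ν + 1)) := by
    intro z; simp [term, P, ascPochhammer_one]; ring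
  have h1' : ∀ z : ℝ, term μ z 1 = 3 * z ^ 2 / (4 * (μ + 1)) := by
    intro z; simp [term, P, ascPochhammer_one]; ring
  rw [h0, h0, h0', h0', h1, h1, h1', h1']
  have key : (1 : ℝ) * (3 * x ^ 2 / (4 * (μ + 1))) - 1 * (3 * y ^ 2 / (4 * (μ + 1))) +
      (3 * y ^ 2 / (4 * (ν + 1)) * 1 - 3 * x ^ 2 / (4 * (ν + 1)) * 1)
      = 3 * (y ^ 2 - x ^ 2) * (μ - ν) / (4 * (ν + 1) * (μ + 1)) := by
    field_simp
    ring
  have hx2 : x ^ 2 < y ^ 2 := by nlinarith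
  calc (0:ℝ) < 3 * (y ^ 2 - x ^ 2) * (μ - ν) / (4 * (ν + 1) * (μ + 1)) := by
        apply div_pos
        · nlinarith
        · positivity
    _ = _ := by linarith [key]

end Stmt6

open Stmt6

theorem stmt_6 (μ ν : ℝ) (hν : -1 < ν) (hμν : ν < μ) :
    StrictMonoOn (fun x => lam ν x / lam μ x) (Set.Ioi 0) := by
  have hμ : -1 < μ := lt_trans hν hμν
  intro x hx y hy hxy
  simp only [Set.mem_Ioi] at hx hy
  have hxle : x ≤ y := le_of_lt hxy
  simp only
  rw [div_lt_div_iff₀ (lam_pos hμ hx.le) (lam_pos hμ hy.le)]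
  -- goal : lam ν x * lam μ y < lam ν y * lam μ x
  set F : ℕ × ℕ → ℝ := fun p => term ν x p.1 * term μ y p.2 with hFdef
  set G : ℕ × ℕ → ℝ := fun p => term ν y p.1 * term μ x p.2 with hGdef
  have hsF : Summable F :=
    (summable_term hν x).mul_of_nonneg (summable_term hμ y)
      (fun n => term_nonneg hν hx.le n) (fun n => term_nonneg hμ hy.le n)
  have hsG : Summable G :=
    (summable_term hν y).mul_of_nonneg (summable_term hμ x)
      (fun n => term_nonneg hν hy.le n) (fun n => term_nonneg hμ hx.le n)
  have eqF : lam ν x * lam μ y = ∑' p : ℕ × ℕ, F p := by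
    rw [lam_eq, lam_eq]
    exact Summable.tsum_mul_tsum (summable_term hν x) (summable_term hμ y) hsF
  have eqG : lam ν y * lam μ x = ∑' p : ℕ × ℕ, G p := by
    rw [lam_eq, lam_eq]
    exact Summable.tsum_mul_tsum (summable_term hν y) (summable_term hμ x) hsG
  rw [eqF, eqG]
  set D : ℕ × ℕ → ℝ := fun p => G p - F p with hDdef
  have hsD : Summable D := hsG.sub hsF
  have hsDs : Summable (fun p : ℕ × ℕ => D p.swap) :=
    (Equiv.prodComm ℕ ℕ).summable_iff.2 hsD
  have hswap : ∑' p : ℕ × ℕ, D p.swap = ∑' p, D p :=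
    (Equiv.prodComm ℕ ℕ).tsum_eq D
  have hpos : 0 < ∑' p : ℕ × ℕ, (D p + D p.swap) := by
    refine Summable.tsum_pos (hsD.add hsDs) (fun p => ?_) ((0 : ℕ), (1 : ℕ)) ?_
    · have h := E_nonneg hν hμν.le hx hxle p.1 p.2
      simp only [hDdef, hGdef, hFdef, Prod.fst_swap, Prod.snd_swap]
      linarith
    · have h := E01_pos hν hμν hx hxy
      simp only [hDdef, hGdef, hFdef, Prod.fst_swap, Prod.snd_swap]
      linarith
  rw [Summable.tsum_add hsD hsDs, hswap] at hpos
  have hD : ∑' p, D p = ∑' p, G p - ∑' p, F p := Summable.tsum_sub hsG hsF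
  linarith
end

section
/- Let ν > 1/2 and define λ_ν(x) = ∑_{n≥0} (2n+1) x^{2n} / (4^n · n! · (ν+1)_n). Then x ↦ λ_ν(x)/cosh x is strictly decreasing on (0,∞), and if -1 < ν < 1/2 it is strictly increasing on (0,∞). -/
namespace Stmt7Aux

/-- The coefficient of `x ^ (2n)` in `lam ν`. -/
noncomputable def C (ν : ℝ) (n : ℕ) : ℝ :=
  (2 * (n : ℝ) + 1) / ((4 : ℝ) ^ n * (n.factorial : ℝ) * (ascPochhammer ℝ n).eval (ν + 1))

/-- The coefficient of `x ^ (2n)` in `cosh`. -/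
noncomputable def D (n : ℕ) : ℝ := (((2 * n).factorial : ℝ))⁻¹

lemma poch_pos {ν : ℝ} (hν : -1 < ν) (n : ℕ) : 0 < (ascPochhammer ℝ n).eval (ν + 1) :=
  ascPochhammer_pos n _ (by linarith)

lemma C_pos {ν : ℝ} (hν : -1 < ν) (n : ℕ) : 0 < C ν n := by
  have h := poch_pos hν n
  have h4 : (0:ℝ) < 4 ^ n := by positivity
  have hf : (0:ℝ) < (n.factorial : ℝ) := by exact_mod_cast n.factorial_pos
  exact div_pos (by positivity) (by positivity)

lemma D_pos (n : ℕ) : 0 < D n := by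
  have : (0:ℝ) < ((2 * n).factorial : ℝ) := by exact_mod_cast (2 * n).factorial_pos
  exact inv_pos.2 this

lemma lam_eq (ν x : ℝ) : lam ν x = ∑' n, C ν n * x ^ (2 * n) := by
  unfold lam C
  congr 1
  funext n
  rw [mul_div_right_comm]

lemma cosh_eq (x : ℝ) : Real.cosh x = ∑' n, D n * x ^ (2 * n) := by
  rw [Real.cosh_eq_tsum]
  congr 1
  funext n
  rw [D, div_eq_mul_inv, mul_comm]

lemma summable_D (x : ℝ) : Summable (fun n => D n * x ^ (2 * n)) := by
  have := (Real.hasSum_cosh x).summable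
  refine this.congr (fun n => ?_)
  rw [D, div_eq_mul_inv, mul_comm]

lemma two_n_le_three_pow (n : ℕ) : (2 * (n:ℝ) + 1) ≤ 3 ^ n := by
  induction n with
  | zero => norm_num
  | succ n ih =>
    have hn : (0:ℝ) ≤ (n:ℝ) := Nat.cast_nonneg n
    push_cast
    rw [pow_succ]
    push_cast at ih
    nlinarith

lemma poch_ge {ν : ℝ} (hν : -1 < ν) (n : ℕ) :
    min (ν + 1) 1 ^ n * (n.factorial : ℝ) ≤ (ascPochhammer ℝ n).eval (ν + 1) := by
  induction n with
  | zero => simp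
  | succ n ih =>
    rw [ascPochhammer_succ_eval]
    have h1 : (0:ℝ) < min (ν + 1) 1 := lt_min (by linarith) one_pos
    have h2 : min (ν + 1) 1 * ((n:ℝ) + 1) ≤ ν + 1 + n := by
      have ha : min (ν + 1) 1 ≤ ν + 1 := min_le_left _ _
      have hb : min (ν + 1) 1 ≤ 1 := min_le_right _ _
      nlinarith [Nat.cast_nonneg (α := ℝ) n]
    have hfc : (((n+1).factorial : ℕ) : ℝ) = ((n:ℝ) + 1) * (n.factorial : ℝ) := by
      rw [Nat.factorial_succ]; push_cast; ring
    rw [hfc, pow_succ]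
    have hposn : (0:ℝ) ≤ min (ν + 1) 1 ^ n * (n.factorial : ℝ) := by
      have hf : (0:ℝ) < (n.factorial : ℝ) := by exact_mod_cast n.factorial_pos
      positivity
    calc min (ν + 1) 1 ^ n * min (ν + 1) 1 * (((n:ℝ) + 1) * (n.factorial : ℝ))
        = (min (ν + 1) 1 ^ n * (n.factorial : ℝ)) * (min (ν + 1) 1 * ((n:ℝ) + 1)) := by ring
      _ ≤ (ascPochhammer ℝ n).eval (ν + 1) * (ν + 1 + n) := by
          apply mul_le_mul ih h2 (by positivity)
          exact (poch_pos hν n).le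

lemma summable_C {ν : ℝ} (hν : -1 < ν) (x : ℝ) :
    Summable (fun n => C ν n * x ^ (2 * n)) := by
  set m : ℝ := min (ν + 1) 1 with hm
  have hmpos : 0 < m := lt_min (by linarith) one_pos
  refine Summable.of_nonneg_of_le (fun n => ?_) (fun n => ?_)
    (Real.summable_pow_div_factorial (3 * x ^ 2 / (4 * m)))
  · have hx : 0 ≤ x ^ (2 * n) := by rw [pow_mul]; positivity
    exact mul_nonneg (C_pos hν n).le hx
  · have hf : (0:ℝ) < (n.factorial : ℝ) := by exact_mod_cast n.factorial_pos
    have hP := poch_pos hν n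
    have hPc := poch_ge hν n
    have h4 : (0:ℝ) < 4 ^ n := by positivity
    have hxp : (0:ℝ) ≤ (x ^ 2) ^ n := by positivity
    have step1 : C ν n * x ^ (2 * n)
        ≤ (2 * (n:ℝ) + 1) * (x ^ 2) ^ n / (4 ^ n * (n.factorial:ℝ) * (m ^ n * (n.factorial:ℝ))) := by
      rw [C, pow_mul, div_mul_eq_mul_div]
      exact div_le_div_of_nonneg_left (by positivity) (by positivity)
        (mul_le_mul_of_nonneg_left hPc (by positivity))
    refine step1.trans ?_
    have hfne : ((n.factorial : ℕ) : ℝ) ≠ 0 := hf.ne'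
    have hmne : m ^ n ≠ 0 := (pow_pos hmpos n).ne'
    have h4ne : ((4:ℝ) ^ n) ≠ 0 := h4.ne'
    have key : (2 * (n:ℝ) + 1) * (x ^ 2) ^ n / (4 ^ n * (n.factorial:ℝ) * (m ^ n * (n.factorial:ℝ)))
        = ((2 * (n:ℝ) + 1) / (n.factorial:ℝ)) * ((x ^ 2) ^ n / (4 ^ n * m ^ n * (n.factorial:ℝ))) := by
      rw [div_mul_div_comm]
      ring_nf
    have key2 : (3 * x ^ 2 / (4 * m)) ^ n / (n.factorial:ℝ)
        = (3:ℝ) ^ n * ((x ^ 2) ^ n / (4 ^ n * m ^ n * (n.factorial:ℝ))) := by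
      rw [div_pow, mul_pow, mul_pow, mul_div_assoc, mul_div_assoc, div_div]
    rw [key, key2]
    apply mul_le_mul_of_nonneg_right ?_ (by positivity)
    calc (2 * (n:ℝ) + 1) / (n.factorial:ℝ) ≤ (2 * (n:ℝ) + 1) / 1 := by
          apply div_le_div_of_nonneg_left (by positivity) one_pos
          exact_mod_cast n.factorial_pos
      _ = 2 * (n:ℝ) + 1 := by rw [div_one]
      _ ≤ 3 ^ n := two_n_le_three_pow n

/-- The ratio `C ν n * (2n)!`, which is monotone in `n`. -/
noncomputable def H (ν : ℝ) (n : ℕ) : ℝ := C ν n * ((2 * n).factorial : ℝ)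

lemma H_pos {ν : ℝ} (hν : -1 < ν) (n : ℕ) : 0 < H ν n := by
  have : (0:ℝ) < ((2 * n).factorial : ℝ) := by exact_mod_cast (2 * n).factorial_pos
  exact mul_pos (C_pos hν n) this

lemma H_succ {ν : ℝ} (hν : -1 < ν) (n : ℕ) :
    H ν (n + 1) * (2 * (ν + 1 + n)) = H ν n * (2 * (n:ℝ) + 3) := by
  have hP := (poch_pos hν n).ne'
  have hf : ((n.factorial : ℕ) : ℝ) ≠ 0 := by
    exact_mod_cast n.factorial_pos.ne'
  have hne : ν + 1 + (n:ℝ) ≠ 0 := by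
    have : (0:ℝ) ≤ (n:ℝ) := Nat.cast_nonneg n
    intro h; linarith
  have h4 : ((4:ℝ) ^ n) ≠ 0 := by positivity
  have fac1 : (((2 * (n+1)).factorial : ℕ) : ℝ)
      = (2 * (n:ℝ) + 2) * ((2 * (n:ℝ) + 1) * (((2 * n).factorial : ℕ) : ℝ)) := by
    have h : 2 * (n + 1) = (2 * n + 1) + 1 := by ring
    rw [h, Nat.factorial_succ, Nat.factorial_succ]
    push_cast
    ring
  have fac2 : (((n+1).factorial : ℕ) : ℝ) = ((n:ℝ) + 1) * ((n.factorial : ℕ) : ℝ) := by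
    rw [Nat.factorial_succ]; push_cast; ring
  unfold H C
  rw [ascPochhammer_succ_eval, fac1, fac2]
  push_cast
  field_simp
  ring

lemma H_strictAnti {ν : ℝ} (h12 : 1/2 < ν) : StrictAnti (H ν) := by
  have hν : -1 < ν := by linarith
  apply strictAnti_nat_of_succ_lt
  intro n
  have hn : (0:ℝ) ≤ (n:ℝ) := Nat.cast_nonneg n
  have hpos : (0:ℝ) < 2 * (ν + 1 + n) := by linarith
  have key := H_succ hν n
  have hlt : H ν n * (2 * (n:ℝ) + 3) < H ν n * (2 * (ν + 1 + n)) := by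
    apply mul_lt_mul_of_pos_left ?_ (H_pos hν n)
    linarith
  have := key.trans_lt hlt
  exact lt_of_mul_lt_mul_right this hpos.le

lemma H_strictMono {ν : ℝ} (hν : -1 < ν) (h12 : ν < 1/2) : StrictMono (H ν) := by
  apply strictMono_nat_of_lt_succ
  intro n
  have hn : (0:ℝ) ≤ (n:ℝ) := Nat.cast_nonneg n
  have hpos : (0:ℝ) < 2 * (ν + 1 + n) := by linarith
  have key := H_succ hν n
  have hlt : H ν n * (2 * (ν + 1 + n)) < H ν n * (2 * (n:ℝ) + 3) := by
    apply mul_lt_mul_of_pos_left ?_ (H_pos hν n)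
    linarith
  rw [← key] at hlt
  exact lt_of_mul_lt_mul_right hlt hpos.le

/-- Cross form: from `H` monotonicity to the coefficient cross-inequality. -/
lemma cross_of_H {ν : ℝ} {m n : ℕ} (hH : H ν n < H ν m) :
    C ν n * D m < C ν m * D n := by
  have hfm : (0:ℝ) < ((2 * m).factorial : ℝ) := by exact_mod_cast (2 * m).factorial_pos
  have hfn : (0:ℝ) < ((2 * n).factorial : ℝ) := by exact_mod_cast (2 * n).factorial_pos
  have e1 : C ν n * D m = H ν n * (D n * D m) := by
    rw [H, D, D]; field_simp
  have e2 : C ν m * D n = H ν m * (D n * D m) := by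
    rw [H, D, D]; field_simp
  rw [e1, e2]
  exact mul_lt_mul_of_pos_right hH (mul_pos (D_pos n) (D_pos m))

lemma pow_cross {x y : ℝ} (hx : 0 < x) (hxy : x < y) {m n : ℕ} (hmn : m < n) :
    x ^ (2 * n) * y ^ (2 * m) < x ^ (2 * m) * y ^ (2 * n) := by
  have hy : 0 < y := hx.trans hxy
  obtain ⟨k, hk, rfl⟩ : ∃ k, 0 < k ∧ n = m + k := ⟨n - m, by omega, by omega⟩
  have h2 : 2 * (m + k) = 2 * m + 2 * k := by ring
  rw [h2, pow_add, pow_add]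
  have hpk : x ^ (2 * k) < y ^ (2 * k) :=
    pow_lt_pow_left₀ hxy hx.le (by omega)
  have hxm : (0:ℝ) < x ^ (2 * m) := by positivity
  have hym : (0:ℝ) < y ^ (2 * m) := by positivity
  calc x ^ (2 * m) * x ^ (2 * k) * y ^ (2 * m)
      = (x ^ (2 * m) * y ^ (2 * m)) * x ^ (2 * k) := by ring
    _ < (x ^ (2 * m) * y ^ (2 * m)) * y ^ (2 * k) := by
        exact mul_lt_mul_of_pos_left hpk (by positivity)
    _ = x ^ (2 * m) * (y ^ (2 * m) * y ^ (2 * k)) := by ring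

/-- The product summand. -/
noncomputable def PP (c d : ℕ → ℝ) (x y : ℝ) : ℕ × ℕ → ℝ :=
  fun p => (c p.1 * x ^ (2 * p.1)) * (d p.2 * y ^ (2 * p.2))

/-- Core monotone-ratio inequality for two power series in `x^2`. -/
lemma core {c d : ℕ → ℝ} {x y : ℝ} (hx : 0 < x) (hxy : x < y)
    (hcpos : ∀ n, 0 < c n) (hdpos : ∀ n, 0 < d n)
    (hcross : ∀ m n, m < n → c n * d m < c m * d n)
    (hcx : Summable fun n => c n * x ^ (2 * n))
    (hcy : Summable fun n => c n * y ^ (2 * n))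
    (hdx : Summable fun n => d n * x ^ (2 * n))
    (hdy : Summable fun n => d n * y ^ (2 * n)) :
    (∑' n, c n * y ^ (2 * n)) * (∑' n, d n * x ^ (2 * n)) <
      (∑' n, c n * x ^ (2 * n)) * (∑' n, d n * y ^ (2 * n)) := by
  have hy : 0 < y := hx.trans hxy
  have nnx : ∀ (g : ℕ → ℝ), (∀ n, 0 < g n) → ∀ (z : ℝ), 0 < z →
      ∀ n, 0 ≤ g n * z ^ (2 * n) := fun g hg z hz n => by
    have := (hg n).le
    positivity
  have SA0 := Summable.mul_of_nonneg hcx hdy (nnx c hcpos x hx) (nnx d hdpos y hy)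
  beta_reduce at SA0
  have SA : Summable (PP c d x y) := SA0
  have SB0 := Summable.mul_of_nonneg hcy hdx (nnx c hcpos y hy) (nnx d hdpos x hx)
  beta_reduce at SB0
  have SB : Summable (PP c d y x) := SB0
  have SAB : Summable (fun p => PP c d x y p - PP c d y x p) := SA.sub SB
  have Sswap : Summable (fun p : ℕ × ℕ => PP c d x y p.swap - PP c d y x p.swap) :=
    ((Equiv.prodComm ℕ ℕ).summable_iff).2 SAB
  have symm_eq : ∀ p : ℕ × ℕ,
      (PP c d x y p - PP c d y x p) + (PP c d x y p.swap - PP c d y x p.swap)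
      = (c p.1 * d p.2 - c p.2 * d p.1) *
        (x ^ (2 * p.1) * y ^ (2 * p.2) - x ^ (2 * p.2) * y ^ (2 * p.1)) := by
    intro p
    simp only [PP, Prod.fst_swap, Prod.snd_swap]
    ring
  have symm_nonneg : ∀ p : ℕ × ℕ,
      0 ≤ (PP c d x y p - PP c d y x p) + (PP c d x y p.swap - PP c d y x p.swap) := by
    intro p
    rw [symm_eq p]
    rcases lt_trichotomy p.1 p.2 with h | h | h
    · have h1 : 0 < c p.1 * d p.2 - c p.2 * d p.1 := sub_pos.2 (hcross _ _ h)
      have h2 : 0 < x ^ (2 * p.1) * y ^ (2 * p.2) - x ^ (2 * p.2) * y ^ (2 * p.1) :=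
        sub_pos.2 (pow_cross hx hxy h)
      positivity
    · rw [h]; simp
    · have h1 : c p.1 * d p.2 - c p.2 * d p.1 < 0 := sub_neg.2 (hcross _ _ h)
      have h2 : x ^ (2 * p.1) * y ^ (2 * p.2) - x ^ (2 * p.2) * y ^ (2 * p.1) < 0 :=
        sub_neg.2 (pow_cross hx hxy h)
      exact (mul_pos_of_neg_of_neg h1 h2).le
  have symm_pos01 : 0 < (PP c d x y (0,1) - PP c d y x (0,1)) +
      (PP c d x y ((0,1) : ℕ × ℕ).swap - PP c d y x ((0,1) : ℕ × ℕ).swap) := by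
    rw [symm_eq (0,1)]
    have h2 : 0 < c 0 * d 1 - c 1 * d 0 := sub_pos.2 (hcross 0 1 one_pos)
    have h3 : 0 < x ^ (2 * 0) * y ^ (2 * 1) - x ^ (2 * 1) * y ^ (2 * 0) :=
      sub_pos.2 (pow_cross hx hxy one_pos)
    exact mul_pos h2 h3
  have key : 0 < ∑' p : ℕ × ℕ,
      ((PP c d x y p - PP c d y x p) + (PP c d x y p.swap - PP c d y x p.swap)) :=
    Summable.tsum_pos (SAB.add Sswap) symm_nonneg (0,1) symm_pos01
  have split : ∑' p : ℕ × ℕ,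
      ((PP c d x y p - PP c d y x p) + (PP c d x y p.swap - PP c d y x p.swap))
      = (∑' p, (PP c d x y p - PP c d y x p)) +
        (∑' p : ℕ × ℕ, (PP c d x y p.swap - PP c d y x p.swap)) :=
    Summable.tsum_add SAB Sswap
  have swap_eq : (∑' p : ℕ × ℕ, (PP c d x y p.swap - PP c d y x p.swap))
      = ∑' p, (PP c d x y p - PP c d y x p) :=
    (Equiv.prodComm ℕ ℕ).tsum_eq (fun p => PP c d x y p - PP c d y x p)
  rw [split, swap_eq] at key
  have hdiff : 0 < ∑' p, (PP c d x y p - PP c d y x p) := by linarith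
  have tsub : ∑' p, (PP c d x y p - PP c d y x p)
      = (∑' p, PP c d x y p) - (∑' p, PP c d y x p) := Summable.tsum_sub SA SB
  rw [tsub] at hdiff
  have eA : (∑' n, c n * x ^ (2 * n)) * (∑' n, d n * y ^ (2 * n)) = ∑' p, PP c d x y p := by
    have h := Summable.tsum_mul_tsum hcx hdy SA
    beta_reduce at h
    exact h
  have eB : (∑' n, c n * y ^ (2 * n)) * (∑' n, d n * x ^ (2 * n)) = ∑' p, PP c d y x p := by
    have h := Summable.tsum_mul_tsum hcy hdx SB
    beta_reduce at h
    exact h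
  rw [eA, eB]
  linarith

end Stmt7Aux

open Stmt7Aux in
theorem stmt_7 (ν : ℝ) :
    (1/2 < ν → StrictAntiOn (fun x => lam ν x / Real.cosh x) (Set.Ioi 0)) ∧
    (-1 < ν ∧ ν < 1/2 → StrictMonoOn (fun x => lam ν x / Real.cosh x) (Set.Ioi 0)) := by
  constructor
  · intro h12 a ha b hb hab
    have hν : -1 < ν := by linarith
    have ha' : (0:ℝ) < a := ha
    simp only
    rw [div_lt_div_iff₀ (Real.cosh_pos _) (Real.cosh_pos _)]
    rw [lam_eq, lam_eq, cosh_eq, cosh_eq]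
    exact core ha' hab (C_pos hν) D_pos
      (fun m n hmn => cross_of_H (H_strictAnti h12 hmn))
      (summable_C hν a) (summable_C hν b) (summable_D a) (summable_D b)
  · rintro ⟨hν, h12⟩ a ha b hb hab
    have ha' : (0:ℝ) < a := ha
    simp only
    rw [div_lt_div_iff₀ (Real.cosh_pos _) (Real.cosh_pos _)]
    rw [lam_eq, lam_eq, cosh_eq, cosh_eq]
    have := core ha' hab D_pos (C_pos hν)
      (fun m n hmn => by
        have hH : H ν m < H ν n := H_strictMono hν h12 hmn
        -- need : D n * C ν m < D m * C ν n
        have hfm : (0:ℝ) < ((2 * m).factorial : ℝ) := by exact_mod_cast (2 * m).factorial_pos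
        have hfn : (0:ℝ) < ((2 * n).factorial : ℝ) := by exact_mod_cast (2 * n).factorial_pos
        have e1 : D n * C ν m = H ν m * (D n * D m) := by
          rw [H, D, D]; field_simp
        have e2 : D m * C ν n = H ν n * (D n * D m) := by
          rw [H, D, D]; field_simp
        rw [e1, e2]
        exact mul_lt_mul_of_pos_right hH (mul_pos (D_pos n) (D_pos m)))
      (summable_D a) (summable_D b) (summable_C hν a) (summable_C hν b)
    linarith [this]
end

section
/- For each fixed x ∈ ℝ, the function ν ↦ λ_ν(x) = ∑_{n≥0} (2n+1) x^{2n} / (4^n · n! · (ν+1)_n) is log-convex on (-1, ∞), i.e., for ν₁, ν₂ > -1 and α ∈ [0,1], λ_{αν₁+(1-α)ν₂}(x) ≤ λ_{ν₁}(x)^α · λ_{ν₂}(x)^{1-α}. -/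
namespace Stmt10Aux

noncomputable def term (ν x : ℝ) (n : ℕ) : ℝ :=
  (2 * (n : ℝ) + 1) * x ^ (2 * n) /
    ((4 : ℝ) ^ n * (n.factorial : ℝ) * (ascPochhammer ℝ n).eval (ν + 1))

lemma lam_eq (ν x : ℝ) : lam ν x = ∑' n, term ν x n := rfl

lemma poch_prod (n : ℕ) (t : ℝ) :
    (ascPochhammer ℝ n).eval t = ∏ k ∈ Finset.range n, (t + k) := by
  induction n with
  | zero => simp
  | succ n ih => rw [ascPochhammer_succ_eval, ih, Finset.prod_range_succ]

lemma poch_pos {ν : ℝ} (hν : -1 < ν) (n : ℕ) :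
    0 < (ascPochhammer ℝ n).eval (ν + 1) :=
  ascPochhammer_pos n _ (by linarith)

lemma num_nonneg (x : ℝ) (n : ℕ) : 0 ≤ (2 * (n : ℝ) + 1) * x ^ (2 * n) := by
  have : (0:ℝ) ≤ x ^ (2 * n) := by
    rw [pow_mul]; positivity
  positivity

lemma term_nonneg {ν : ℝ} (hν : -1 < ν) (x : ℝ) (n : ℕ) : 0 ≤ term ν x n := by
  have h1 := num_nonneg x n
  have h2 := poch_pos hν n
  have h3 : (0:ℝ) < (4 : ℝ) ^ n * (n.factorial : ℝ) := by positivity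
  exact div_nonneg h1 (le_of_lt (by positivity))

lemma two_mul_add_one_le (n : ℕ) : (2 * (n : ℝ) + 1) ≤ 3 ^ n := by
  induction n with
  | zero => norm_num
  | succ n ih =>
    have : (0:ℝ) ≤ (n:ℝ) := n.cast_nonneg
    push_cast
    push_cast at ih
    rw [pow_succ]
    nlinarith [pow_nonneg (by norm_num : (0:ℝ) ≤ 3) n]

lemma summable_term {ν : ℝ} (hν : -1 < ν) (x : ℝ) : Summable (term ν x) := by
  have hm0 : (0:ℝ) < min (ν + 1) 1 := lt_min (by linarith) one_pos
  have hm1 : min (ν + 1) 1 ≤ 1 := min_le_right _ _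
  have hmν : min (ν + 1) 1 ≤ ν + 1 := min_le_left _ _
  have key : ∀ n, term ν x n ≤ (3 * x ^ 2 / (2 * min (ν + 1) 1)) ^ n / n.factorial := by
    intro n
    have hP : (min (ν + 1) 1 / 2) ^ n ≤ (ascPochhammer ℝ n).eval (ν + 1) := by
      rw [poch_prod]
      calc (min (ν + 1) 1 / 2) ^ n = ∏ _k ∈ Finset.range n, (min (ν + 1) 1 / 2) := by
            rw [Finset.prod_const, Finset.card_range]
        _ ≤ ∏ k ∈ Finset.range n, (ν + 1 + k) := by
            refine Finset.prod_le_prod (fun k _ => by positivity) (fun k _ => ?_)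
            have : (0:ℝ) ≤ (k:ℝ) := Nat.cast_nonneg k
            nlinarith
    have hnum : (2 * (n : ℝ) + 1) * x ^ (2 * n) ≤ 3 ^ n * (x ^ 2) ^ n := by
      rw [pow_mul]
      exact mul_le_mul_of_nonneg_right (two_mul_add_one_le n) (by positivity)
    have hfac1 : (1:ℝ) ≤ (n.factorial : ℝ) := by exact_mod_cast n.factorial_pos
    have hden : (2 * min (ν + 1) 1) ^ n * (n.factorial : ℝ) ≤
        (4 : ℝ) ^ n * (n.factorial : ℝ) * (ascPochhammer ℝ n).eval (ν + 1) := by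
      have e : (2 * min (ν + 1) 1) ^ n * (n.factorial : ℝ)
          = ((4:ℝ) ^ n * (n.factorial : ℝ)) * (min (ν + 1) 1 / 2) ^ n := by
        rw [mul_comm ((4:ℝ)^n * (n.factorial:ℝ)) _, ← mul_assoc, ← mul_pow]
        have h4 : (min (ν + 1) 1 / 2) * 4 = 2 * min (ν + 1) 1 := by ring
        rw [h4]
      rw [e]
      exact mul_le_mul_of_nonneg_left hP (by positivity)
    have hdpos : (0:ℝ) < (2 * min (ν + 1) 1) ^ n * (n.factorial : ℝ) := by positivity
    calc term ν x n ≤ (3 ^ n * (x ^ 2) ^ n) / ((2 * min (ν + 1) 1) ^ n * (n.factorial : ℝ)) :=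
          div_le_div₀ (by positivity) hnum hdpos hden
      _ = (3 * x ^ 2 / (2 * min (ν + 1) 1)) ^ n / n.factorial := by
          rw [div_pow, mul_pow, div_div]
          ring
  exact Summable.of_nonneg_of_le (term_nonneg hν x) key (Real.summable_pow_div_factorial _)

lemma term_logconvex {ν₁ ν₂ : ℝ} (h₁ : -1 < ν₁) (h₂ : -1 < ν₂) {α : ℝ}
    (hα₀ : 0 < α) (hα₁ : α < 1) (x : ℝ) (n : ℕ) :
    term (α * ν₁ + (1 - α) * ν₂) x n ≤ (term ν₁ x n) ^ α * (term ν₂ x n) ^ (1 - α) := by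
  have hP1 := poch_pos h₁ n
  have hP2 := poch_pos h₂ n
  set c : ℝ := (2 * (n : ℝ) + 1) * x ^ (2 * n) with hc
  have hc0 : 0 ≤ c := num_nonneg x n
  set D : ℝ := (4 : ℝ) ^ n * (n.factorial : ℝ) with hD
  have hD0 : (0:ℝ) < D := by positivity
  set P₁ : ℝ := (ascPochhammer ℝ n).eval (ν₁ + 1) with hP₁d
  set P₂ : ℝ := (ascPochhammer ℝ n).eval (ν₂ + 1) with hP₂d
  set Pm : ℝ := (ascPochhammer ℝ n).eval (α * ν₁ + (1 - α) * ν₂ + 1) with hPmd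
  have key : P₁ ^ α * P₂ ^ (1 - α) ≤ Pm := by
    have e1 : P₁ ^ α = ∏ k ∈ Finset.range n, (ν₁ + 1 + k) ^ α := by
      rw [hP₁d, poch_prod]
      exact (Real.finset_prod_rpow (Finset.range n) (fun k : ℕ => ν₁ + 1 + (k:ℝ))
        (fun k _ => by have : (0:ℝ) ≤ (k:ℝ) := Nat.cast_nonneg k; show (0:ℝ) ≤ ν₁ + 1 + (k:ℝ); linarith) α).symm
    have e2 : P₂ ^ (1 - α) = ∏ k ∈ Finset.range n, (ν₂ + 1 + k) ^ (1 - α) := by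
      rw [hP₂d, poch_prod]
      exact (Real.finset_prod_rpow (Finset.range n) (fun k : ℕ => ν₂ + 1 + (k:ℝ))
        (fun k _ => by have : (0:ℝ) ≤ (k:ℝ) := Nat.cast_nonneg k; show (0:ℝ) ≤ ν₂ + 1 + (k:ℝ); linarith) (1 - α)).symm
    rw [e1, e2, ← Finset.prod_mul_distrib, hPmd, poch_prod]
    refine Finset.prod_le_prod (fun k _ => ?_) (fun k _ => ?_)
    · have hk : (0:ℝ) ≤ (k:ℝ) := Nat.cast_nonneg k
      exact mul_nonneg (Real.rpow_nonneg (by linarith) _) (Real.rpow_nonneg (by linarith) _)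
    have hk : (0:ℝ) ≤ (k:ℝ) := Nat.cast_nonneg k
    have := Real.geom_mean_le_arith_mean2_weighted hα₀.le (by linarith : (0:ℝ) ≤ 1 - α)
      (by linarith : (0:ℝ) ≤ ν₁ + 1 + k) (by linarith : (0:ℝ) ≤ ν₂ + 1 + k) (by ring)
    calc (ν₁ + 1 + k) ^ α * (ν₂ + 1 + k) ^ (1 - α)
        ≤ α * (ν₁ + 1 + k) + (1 - α) * (ν₂ + 1 + k) := this
      _ = α * ν₁ + (1 - α) * ν₂ + 1 + k := by ring
  have hgeo_pos : 0 < P₁ ^ α * P₂ ^ (1 - α) := by positivity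
  have hPm : 0 < Pm := lt_of_lt_of_le hgeo_pos key
  have ht1 : term ν₁ x n = c / (D * P₁) := rfl
  have ht2 : term ν₂ x n = c / (D * P₂) := rfl
  have htm : term (α * ν₁ + (1 - α) * ν₂) x n = c / (D * Pm) := rfl
  have rhs_eq : (term ν₁ x n) ^ α * (term ν₂ x n) ^ (1 - α)
      = c / (D * (P₁ ^ α * P₂ ^ (1 - α))) := by
    rcases eq_or_lt_of_le hc0 with hc'|hc'
    · rw [ht1, ht2, ← hc', zero_div, zero_div,
        Real.zero_rpow hα₀.ne', Real.zero_rpow (by linarith : (1:ℝ) - α ≠ 0), zero_mul, zero_div]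
    · rw [ht1, ht2, Real.div_rpow hc0 (by positivity), Real.div_rpow hc0 (by positivity),
        Real.mul_rpow hD0.le hP1.le, Real.mul_rpow hD0.le hP2.le, div_mul_div_comm,
        mul_mul_mul_comm]
      have eα : α + (1 - α) = 1 := by ring
      have ec : c ^ α * c ^ (1 - α) = c := by
        rw [← Real.rpow_add hc', eα, Real.rpow_one]
      have eD : D ^ α * D ^ (1 - α) = D := by
        rw [← Real.rpow_add hD0, eα, Real.rpow_one]
      rw [ec, eD]
  rw [htm, rhs_eq]
  gcongr

end Stmt10Aux

open Stmt10Aux in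
theorem stmt_10 (x ν₁ ν₂ α : ℝ) (h₁ : -1 < ν₁) (h₂ : -1 < ν₂)
    (hα₀ : 0 ≤ α) (hα₁ : α ≤ 1) :
    lam (α * ν₁ + (1 - α) * ν₂) x ≤ (lam ν₁ x) ^ α * (lam ν₂ x) ^ (1 - α) := by
  rcases eq_or_lt_of_le hα₀ with h0|h0
  · subst h0
    simp only [zero_mul, sub_zero, one_mul, zero_add, Real.rpow_zero, Real.rpow_one]
    norm_num
  rcases eq_or_lt_of_le hα₁ with h1|h1
  · subst h1
    simp only [one_mul, sub_self, zero_mul, add_zero, Real.rpow_zero, Real.rpow_one]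
    norm_num
  have hmix : (-1:ℝ) < α * ν₁ + (1 - α) * ν₂ := by nlinarith
  set f : ℕ → ℝ := fun n => (term ν₁ x n) ^ α with hf
  set g : ℕ → ℝ := fun n => (term ν₂ x n) ^ (1 - α) with hg
  have hf0 : ∀ n, 0 ≤ f n := fun n => Real.rpow_nonneg (term_nonneg h₁ x n) _
  have hg0 : ∀ n, 0 ≤ g n := fun n => Real.rpow_nonneg (term_nonneg h₂ x n) _
  have hpq : (1/α).HolderConjugate (1/(1-α)) := by
    rw [Real.holderConjugate_iff]
    constructor
    · exact one_lt_one_div h0 h1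
    · rw [one_div, one_div, inv_inv, inv_inv]; ring
  have hfp : ∀ n, f n ^ (1/α) = term ν₁ x n := by
    intro n
    rw [hf, ← Real.rpow_mul (term_nonneg h₁ x n), mul_one_div_cancel h0.ne', Real.rpow_one]
  have hgq : ∀ n, g n ^ (1/(1-α)) = term ν₂ x n := by
    intro n
    rw [hg, ← Real.rpow_mul (term_nonneg h₂ x n), mul_one_div_cancel (by linarith : (1:ℝ) - α ≠ 0),
      Real.rpow_one]
  have hfp_sum : Summable fun n => f n ^ (1/α) :=
    (summable_term h₁ x).congr fun n => (hfp n).symm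
  have hgq_sum : Summable fun n => g n ^ (1/(1-α)) :=
    (summable_term h₂ x).congr fun n => (hgq n).symm
  have hfg_sum : Summable fun n => f n * g n :=
    Real.summable_mul_of_Lp_Lq_of_nonneg hpq hf0 hg0 hfp_sum hgq_sum
  have step1 : lam (α * ν₁ + (1 - α) * ν₂) x ≤ ∑' n, f n * g n := by
    rw [lam_eq]
    exact Summable.tsum_le_tsum (fun n => term_logconvex h₁ h₂ h0 h1 x n)
      (summable_term hmix x) hfg_sum
  have step2 : ∑' n, f n * g n ≤
      (∑' n, f n ^ (1/α)) ^ (1/(1/α)) * (∑' n, g n ^ (1/(1-α))) ^ (1/(1/(1-α))) :=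
    Real.inner_le_Lp_mul_Lq_tsum_of_nonneg hpq hf0 hg0 hfp_sum hgq_sum
  refine step1.trans (step2.trans (le_of_eq ?_))
  rw [one_div_one_div, one_div_one_div, tsum_congr hfp, tsum_congr hgq, lam_eq, lam_eq]
end

section
/- For all ν > 0 and x ∈ ℝ, the reversed Turán-type inequality λ_ν(x)² ≤ λ_{ν-1}(x) · λ_{ν+1}(x) holds, where λ_ν(x) = ∑_{n≥0} (2n+1) x^{2n} / (4^n · n! · (ν+1)_n). -/
lemma poch_one_le {s : ℝ} (hs : 1 ≤ s) (n : ℕ) : 1 ≤ (ascPochhammer ℝ n).eval s := by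
  induction n with
  | zero => simp
  | succ n ih =>
      rw [ascPochhammer_succ_eval]
      have : (1:ℝ) ≤ s + n := le_add_of_le_of_nonneg hs (Nat.cast_nonneg n)
      nlinarith

lemma poch_lower {s : ℝ} (hs : 0 < s) (n : ℕ) : min 1 s ≤ (ascPochhammer ℝ n).eval s := by
  cases n with
  | zero => simp
  | succ n =>
      have h := ascPochhammer_succ_left (S := ℝ) n
      have heval : (ascPochhammer ℝ (n+1)).eval s
          = s * (ascPochhammer ℝ n).eval (s + 1) := by
        rw [h]; simp [Polynomial.eval_comp, mul_comm]
      rw [heval]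
      have h1 : (1:ℝ) ≤ (ascPochhammer ℝ n).eval (s + 1) :=
        poch_one_le (by linarith) n
      calc min 1 s ≤ s := min_le_right _ _
        _ = s * 1 := (mul_one s).symm
        _ ≤ s * (ascPochhammer ℝ n).eval (s + 1) := by nlinarith

lemma two_n_le (n : ℕ) : 2 * (n : ℝ) + 1 ≤ 3 ^ n := by
  induction n with
  | zero => norm_num
  | succ n ih => rw [pow_succ]; push_cast; nlinarith [Nat.cast_nonneg (α := ℝ) n]

set_option maxHeartbeats 1000000 in
lemma term_summable (x : ℝ) {s : ℝ} (hs : 0 < s) :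
    Summable (fun n : ℕ => (2 * (n : ℝ) + 1) * x ^ (2 * n) /
      ((4 : ℝ) ^ n * (n.factorial : ℝ) * (ascPochhammer ℝ n).eval s)) := by
  have hc : 0 < min 1 s := lt_min one_pos hs
  refine Summable.of_nonneg_of_le (fun n => ?_) (fun n => ?_)
    ((Real.summable_pow_div_factorial (3 * x ^ 2 / 4)).mul_left (1 / min 1 s))
  · have hP := ascPochhammer_pos n s hs
    have hxx : x ^ (2 * n) = (x ^ 2) ^ n := by rw [pow_mul]
    rw [hxx]
    positivity
  · have hP : 0 < (ascPochhammer ℝ n).eval s := ascPochhammer_pos n s hs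
    have hPl : min 1 s ≤ (ascPochhammer ℝ n).eval s := poch_lower hs n
    have h3 : 2 * (n : ℝ) + 1 ≤ 3 ^ n := two_n_le n
    have hxp : x ^ (2 * n) = (x ^ 2) ^ n := by rw [pow_mul]
    rw [hxp]
    have hfac : (0:ℝ) < n.factorial := by exact_mod_cast n.factorial_pos
    rw [div_le_iff₀ (by positivity)]
    have key : (2 * (n : ℝ) + 1) * (x ^ 2) ^ n * min 1 s ≤
        (3 * x ^ 2 / 4) ^ n / n.factorial * (4 ^ n * n.factorial) * (ascPochhammer ℝ n).eval s := by
      have h1 : (2 * (n : ℝ) + 1) * (x ^ 2) ^ n ≤ (3 * x ^ 2) ^ n := by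
        rw [mul_pow]
        exact mul_le_mul_of_nonneg_right h3 (by positivity)
      have h2 : (3 * x ^ 2 / 4) ^ n / (n.factorial : ℝ) * (4 ^ n * n.factorial) = (3 * x ^ 2) ^ n := by
        rw [div_pow, div_div]
        exact div_mul_cancel₀ _ (by positivity)
      rw [h2]
      calc (2 * (n : ℝ) + 1) * (x ^ 2) ^ n * min 1 s
          ≤ (3 * x ^ 2) ^ n * min 1 s := by
            exact mul_le_mul_of_nonneg_right h1 (le_of_lt hc)
        _ ≤ (3 * x ^ 2) ^ n * (ascPochhammer ℝ n).eval s := by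
            exact mul_le_mul_of_nonneg_left hPl (by positivity)
        _ = (3 * x ^ 2) ^ n * (ascPochhammer ℝ n).eval s := rfl
    calc (2 * (n : ℝ) + 1) * (x ^ 2) ^ n
        = ((2 * (n : ℝ) + 1) * (x ^ 2) ^ n * min 1 s) * (1 / min 1 s) := by
          field_simp
      _ ≤ ((3 * x ^ 2 / 4) ^ n / n.factorial * (4 ^ n * n.factorial) * (ascPochhammer ℝ n).eval s)
            * (1 / min 1 s) := by
          exact mul_le_mul_of_nonneg_right key (by positivity)
      _ = 1 / min 1 s * ((3 * x ^ 2 / 4) ^ n / n.factorial) *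
            (4 ^ n * n.factorial * (ascPochhammer ℝ n).eval s) := by ring

lemma poch_log_concave {ν : ℝ} (hν : 0 < ν) (n : ℕ) :
    (ascPochhammer ℝ n).eval ν * (ascPochhammer ℝ n).eval (ν + 2)
      ≤ ((ascPochhammer ℝ n).eval (ν + 1)) ^ 2 := by
  induction n with
  | zero => simp
  | succ n ih =>
      rw [ascPochhammer_succ_eval, ascPochhammer_succ_eval, ascPochhammer_succ_eval]
      have h1 : 0 < (ascPochhammer ℝ n).eval ν := ascPochhammer_pos n ν hν
      have h2 : 0 < (ascPochhammer ℝ n).eval (ν + 2) := ascPochhammer_pos n _ (by linarith)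
      have h3 : (0:ℝ) ≤ ν + n := by positivity
      have h4 : (ν + n) * (ν + 2 + n) ≤ (ν + 1 + n) ^ 2 := by nlinarith
      nlinarith [mul_pos h1 h2, sq_nonneg ((ascPochhammer ℝ n).eval (ν + 1))]

theorem stmt_11 (ν : ℝ) (hν : 0 < ν) (x : ℝ) :
    (lam ν x) ^ 2 ≤ lam (ν - 1) x * lam (ν + 1) x := by
  set w : ℕ → ℝ := fun n => (2 * (n : ℝ) + 1) * x ^ (2 * n) /
      ((4 : ℝ) ^ n * (n.factorial : ℝ) * (ascPochhammer ℝ n).eval (ν + 1)) with hw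
  set u : ℕ → ℝ := fun n => (2 * (n : ℝ) + 1) * x ^ (2 * n) /
      ((4 : ℝ) ^ n * (n.factorial : ℝ) * (ascPochhammer ℝ n).eval ν) with hu
  set v : ℕ → ℝ := fun n => (2 * (n : ℝ) + 1) * x ^ (2 * n) /
      ((4 : ℝ) ^ n * (n.factorial : ℝ) * (ascPochhammer ℝ n).eval (ν + 2)) with hv
  have hlamν : lam ν x = ∑' n, w n := rfl
  have hlamm : lam (ν - 1) x = ∑' n, u n := by
    simp only [lam, hu, sub_add_cancel]
  have hlamp : lam (ν + 1) x = ∑' n, v n := by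
    simp only [lam, hv]
    norm_num [add_assoc]
  have hxn : ∀ n : ℕ, (0:ℝ) ≤ x ^ (2 * n) := fun n => by rw [pow_mul]; positivity
  have hPν : ∀ n, (0:ℝ) < (ascPochhammer ℝ n).eval ν := fun n => ascPochhammer_pos n ν hν
  have hP1 : ∀ n, (0:ℝ) < (ascPochhammer ℝ n).eval (ν + 1) :=
    fun n => ascPochhammer_pos n _ (by linarith)
  have hP2 : ∀ n, (0:ℝ) < (ascPochhammer ℝ n).eval (ν + 2) :=
    fun n => ascPochhammer_pos n _ (by linarith)
  have hw0 : ∀ n, 0 ≤ w n := fun n => by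
    have := hP1 n; have := hxn n; simp only [hw]; positivity
  have hu0 : ∀ n, 0 ≤ u n := fun n => by
    have := hPν n; have := hxn n; simp only [hu]; positivity
  have hv0 : ∀ n, 0 ≤ v n := fun n => by
    have := hP2 n; have := hxn n; simp only [hv]; positivity
  have hsw : Summable w := term_summable x (by linarith : (0:ℝ) < ν + 1)
  have hsu : Summable u := term_summable x hν
  have hsv : Summable v := term_summable x (by linarith : (0:ℝ) < ν + 2)
  -- key termwise inequality : w n ^ 2 ≤ u n * v n
  have hkey : ∀ n, w n ^ 2 ≤ u n * v n := by
    intro n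
    have hlc := poch_log_concave hν n
    have hP1n := hP1 n; have hPνn := hPν n; have hP2n := hP2 n
    have hfac : (0:ℝ) < n.factorial := by exact_mod_cast n.factorial_pos
    have h4 : (0:ℝ) < (4:ℝ) ^ n := by positivity
    simp only [hw, hu, hv, div_mul_div_comm, div_pow]
    rw [show (2*(n:ℝ)+1)*x^(2*n)*((2*(n:ℝ)+1)*x^(2*n)) = ((2*(n:ℝ)+1)*x^(2*n))^2 from by ring]
    apply div_le_div_of_nonneg_left
    · positivity
    · positivity
    · calc ((4:ℝ) ^ n * n.factorial * (ascPochhammer ℝ n).eval ν) *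
            ((4:ℝ) ^ n * n.factorial * (ascPochhammer ℝ n).eval (ν + 2))
          = ((4:ℝ) ^ n * n.factorial) ^ 2 *
            ((ascPochhammer ℝ n).eval ν * (ascPochhammer ℝ n).eval (ν + 2)) := by ring
        _ ≤ ((4:ℝ) ^ n * n.factorial) ^ 2 * ((ascPochhammer ℝ n).eval (ν + 1)) ^ 2 := by
            exact mul_le_mul_of_nonneg_left hlc (by positivity)
        _ = ((4:ℝ) ^ n * n.factorial * (ascPochhammer ℝ n).eval (ν + 1)) ^ 2 := by ring
  -- Cauchy–Schwarz
  have hmain : (∑' n, w n) ≤ Real.sqrt (∑' n, u n) * Real.sqrt (∑' n, v n) := by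
    apply Summable.tsum_le_of_sum_le hsw
    intro s
    have hstep : (∑ n ∈ s, w n) ^ 2 ≤ (∑ n ∈ s, u n) * (∑ n ∈ s, v n) := by
      calc (∑ n ∈ s, w n) ^ 2 ≤ (∑ n ∈ s, Real.sqrt (u n * v n)) ^ 2 := by
            apply pow_le_pow_left₀ (Finset.sum_nonneg fun n _ => hw0 n)
            apply Finset.sum_le_sum
            intro n _
            have : w n = Real.sqrt (w n ^ 2) := (Real.sqrt_sq (hw0 n)).symm
            rw [this]
            exact Real.sqrt_le_sqrt (hkey n)
        _ ≤ (∑ n ∈ s, u n) * (∑ n ∈ s, v n) := by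
            apply Finset.sum_sq_le_sum_mul_sum_of_sq_eq_mul
            · intro n _; exact hu0 n
            · intro n _; exact hv0 n
            · intro n _
              exact Real.sq_sqrt (mul_nonneg (hu0 n) (hv0 n))
    have h1 : (∑ n ∈ s, w n) ≤ Real.sqrt ((∑ n ∈ s, u n) * (∑ n ∈ s, v n)) := by
      rw [← Real.sqrt_sq (Finset.sum_nonneg fun n _ => hw0 n)]
      exact Real.sqrt_le_sqrt hstep
    refine h1.trans ?_
    rw [Real.sqrt_mul (Finset.sum_nonneg fun n _ => hu0 n)]
    exact mul_le_mul (Real.sqrt_le_sqrt (Summable.sum_le_tsum s (fun n _ => hu0 n) hsu))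
      (Real.sqrt_le_sqrt (Summable.sum_le_tsum s (fun n _ => hv0 n) hsv))
      (Real.sqrt_nonneg _) (Real.sqrt_nonneg _)
  rw [hlamν, hlamm, hlamp]
  have htw : 0 ≤ ∑' n, w n := tsum_nonneg hw0
  have htu : 0 ≤ ∑' n, u n := tsum_nonneg hu0
  have htv : 0 ≤ ∑' n, v n := tsum_nonneg hv0
  calc (∑' n, w n) ^ 2 ≤ (Real.sqrt (∑' n, u n) * Real.sqrt (∑' n, v n)) ^ 2 := by
        exact pow_le_pow_left₀ htw hmain 2
    _ = (∑' n, u n) * (∑' n, v n) := by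
        rw [mul_pow, Real.sq_sqrt htu, Real.sq_sqrt htv]
end

section
/- For all x, y in the interval (-r, r), where r ≈ 0.8603 is the first positive root of cos t = t·sin t, the inequality (cosh((x+y)/2) + ((x+y)/2)·sinh((x+y)/2))² · (cos x - x·sin x)(cos y - y·sin y) ≤ (cos((x+y)/2) - ((x+y)/2)·sin((x+y)/2))² · (cosh x + x·sinh x)(cosh y + y·sinh y). -/
open Real Set

private lemma aux_h_pos (t : ℝ) : 0 < Real.cosh t + t * Real.sinh t := by
  have h1 : (1:ℝ) ≤ Real.cosh t := Real.one_le_cosh t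
  have h2 : 0 ≤ t * Real.sinh t := by
    rcases le_or_gt 0 t with h | h
    · have : Real.sinh 0 ≤ Real.sinh t := Real.sinh_le_sinh.mpr h
      rw [Real.sinh_zero] at this
      exact mul_nonneg h this
    · have : Real.sinh t ≤ Real.sinh 0 := Real.sinh_le_sinh.mpr h.le
      rw [Real.sinh_zero] at this
      nlinarith [mul_nonneg (neg_nonneg.mpr h.le) (neg_nonneg.mpr this)]
  linarith

private lemma aux_sinh_sq (t : ℝ) (ht : |t| ≤ 1) : Real.sinh t ^ 2 ≤ 2 := by
  have h1 : |Real.sinh t| = Real.sinh |t| := Real.abs_sinh t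
  have h2 : Real.sinh |t| ≤ Real.sinh 1 := Real.sinh_le_sinh.mpr ht
  have h3 : Real.sinh 1 ≤ 1.36 := by
    rw [Real.sinh_eq]
    have h4 := Real.exp_one_lt_d9
    have h5 : 0 < Real.exp (-1) := Real.exp_pos _
    norm_num
    linarith
  have h6 : 0 ≤ Real.sinh |t| := by
    have : Real.sinh 0 ≤ Real.sinh |t| := Real.sinh_le_sinh.mpr (abs_nonneg t)
    rwa [Real.sinh_zero] at this
  have h7 : Real.sinh t ^ 2 = Real.sinh |t| ^ 2 := by
    rw [← h1, sq_abs]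
  rw [h7]
  nlinarith

private lemma aux_g_hasDeriv (t : ℝ) :
    HasDerivAt (fun u : ℝ => Real.cos u - u * Real.sin u)
      (-(2 * Real.sin t + t * Real.cos t)) t := by
  have h := (Real.hasDerivAt_cos t).sub ((hasDerivAt_id t).mul (Real.hasDerivAt_sin t))
  exact h.congr_deriv (by simp; ring)

private lemma aux_g1_hasDeriv (t : ℝ) :
    HasDerivAt (fun u : ℝ => -(2 * Real.sin u + u * Real.cos u))
      (-(3 * Real.cos t - t * Real.sin t)) t := by
  have h := (((Real.hasDerivAt_sin t).const_mul 2).add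
      ((hasDerivAt_id t).mul (Real.hasDerivAt_cos t))).neg
  exact h.congr_deriv (by simp; ring)

private lemma aux_h_hasDeriv (t : ℝ) :
    HasDerivAt (fun u : ℝ => Real.cosh u + u * Real.sinh u)
      (2 * Real.sinh t + t * Real.cosh t) t := by
  have h := (Real.hasDerivAt_cosh t).add ((hasDerivAt_id t).mul (Real.hasDerivAt_sinh t))
  exact h.congr_deriv (by simp; ring)

private lemma aux_h1_hasDeriv (t : ℝ) :
    HasDerivAt (fun u : ℝ => 2 * Real.sinh u + u * Real.cosh u)
      (3 * Real.cosh t + t * Real.sinh t) t := by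
  have h := ((Real.hasDerivAt_sinh t).const_mul 2).add
      ((hasDerivAt_id t).mul (Real.hasDerivAt_cosh t))
  exact h.congr_deriv (by simp; ring)

private lemma aux_g_cont : Continuous (fun u : ℝ => Real.cos u - u * Real.sin u) :=
  Real.continuous_cos.sub (continuous_id.mul Real.continuous_sin)

theorem stmt_14 (r : ℝ) (hr : 0 < r) (hroot : Real.cos r = r * Real.sin r)
    (hfirst : ∀ t, 0 < t → t < r → Real.cos t ≠ t * Real.sin t)
    (x y : ℝ) (hx : x ∈ Set.Ioo (-r) r) (hy : y ∈ Set.Ioo (-r) r) :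
    (Real.cosh ((x + y) / 2) + ((x + y) / 2) * Real.sinh ((x + y) / 2)) ^ 2 *
        ((Real.cos x - x * Real.sin x) * (Real.cos y - y * Real.sin y)) ≤
      (Real.cos ((x + y) / 2) - ((x + y) / 2) * Real.sin ((x + y) / 2)) ^ 2 *
        ((Real.cosh x + x * Real.sinh x) * (Real.cosh y + y * Real.sinh y)) := by
  set g : ℝ → ℝ := fun u => Real.cos u - u * Real.sin u with hgdef
  set h : ℝ → ℝ := fun u => Real.cosh u + u * Real.sinh u with hhdef
  set D : Set ℝ := Set.Ioo (-r) r with hDdef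
  have hint : interior D = D := isOpen_Ioo.interior_eq
  -- r ≤ 1
  have hr1 : r ≤ 1 := by
    by_contra hcon
    push_neg at hcon
    have hcos1 : Real.cos 1 < Real.sin 1 := by
      have hpi3 : 3 < Real.pi := Real.pi_gt_three
      have hpi4 : Real.pi < 3.15 := Real.pi_lt_d2
      have h1 : Real.cos 1 < Real.cos (Real.pi / 4) := by
        apply Real.cos_lt_cos_of_nonneg_of_le_pi (by positivity) (by linarith) (by linarith)
      have h2 : Real.sin (Real.pi / 4) < Real.sin 1 := by
        apply Real.strictMonoOn_sin (by constructor <;> nlinarith)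
          (by constructor <;> nlinarith) (by nlinarith)
      rw [Real.cos_pi_div_four] at h1
      rw [Real.sin_pi_div_four] at h2
      linarith
    have hmem : (0:ℝ) ∈ Set.Ioo (g 1) (g 0) := by
      simp only [hgdef]
      constructor <;> simp <;> linarith
    obtain ⟨c, hc, hgc⟩ := intermediate_value_Ioo' (by norm_num : (0:ℝ) ≤ 1)
      (aux_g_cont.continuousOn) hmem
    exact hfirst c hc.1 (by linarith [hc.2]) (by simp only [hgdef] at hgc; linarith)
  -- g positive on D
  have hgpos : ∀ t ∈ D, 0 < g t := by
    have key : ∀ t, 0 ≤ t → t < r → 0 < g t := by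
      intro t ht htr
      rcases eq_or_lt_of_le ht with h0 | h0
      · simp [hgdef, ← h0]
      by_contra hle
      push_neg at hle
      rcases eq_or_lt_of_le hle with hz | hz
      · exact hfirst t h0 htr (by simp only [hgdef] at hz; linarith)
      · have hmem : (0:ℝ) ∈ Set.Ioo (g t) (g 0) := by
          refine ⟨hz, ?_⟩
          simp [hgdef]
        obtain ⟨c, hc, hgc⟩ := intermediate_value_Ioo' ht (aux_g_cont.continuousOn) hmem
        exact hfirst c hc.1 (hc.2.trans htr) (by simp only [hgdef] at hgc; linarith)
    intro t ht
    rcases le_or_gt 0 t with h0 | h0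
    · exact key t h0 ht.2
    · have := key (-t) (by linarith) (by linarith [ht.1])
      simpa [hgdef] using this
  -- log h convex on D
  have hconv : ConvexOn ℝ D (fun t => Real.log (h t)) := by
    apply convexOn_of_hasDerivWithinAt2_nonneg (convex_Ioo _ _)
      (f' := fun t => (2 * Real.sinh t + t * Real.cosh t) / (h t))
      (f'' := fun t => ((3 * Real.cosh t + t * Real.sinh t) * (h t)
        - (2 * Real.sinh t + t * Real.cosh t) * (2 * Real.sinh t + t * Real.cosh t)) / (h t) ^ 2)
    · exact ContinuousOn.log
        ((Real.continuous_cosh.add (continuous_id.mul Real.continuous_sinh)).continuousOn)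
        (fun t _ => (aux_h_pos t).ne')
    · intro t _
      exact (((aux_h_hasDeriv t).log (aux_h_pos t).ne')).hasDerivWithinAt
    · intro t _
      exact ((aux_h1_hasDeriv t).div (aux_h_hasDeriv t) (aux_h_pos t).ne').hasDerivWithinAt
    · intro t ht
      rw [hint] at ht
      apply div_nonneg _ (sq_nonneg _)
      have habs : |t| ≤ 1 := by
        rw [abs_le]; constructor <;> [linarith [ht.1]; linarith [ht.2]]
      have h1 : Real.sinh t ^ 2 ≤ 2 := aux_sinh_sq t habs
      have h2 : t ^ 2 ≤ 1 := by nlinarith [abs_nonneg t, sq_abs t]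
      have h3 := Real.cosh_sq_sub_sinh_sq t
      simp only [hhdef]
      nlinarith
  -- log g concave on D
  have hconc : ConcaveOn ℝ D (fun t => Real.log (g t)) := by
    apply concaveOn_of_hasDerivWithinAt2_nonpos (convex_Ioo _ _)
      (f' := fun t => (-(2 * Real.sin t + t * Real.cos t)) / (g t))
      (f'' := fun t => ((-(3 * Real.cos t - t * Real.sin t)) * (g t)
        - (-(2 * Real.sin t + t * Real.cos t)) * (-(2 * Real.sin t + t * Real.cos t))) / (g t) ^ 2)
    · exact ContinuousOn.log aux_g_cont.continuousOn (fun t htD => (hgpos t htD).ne')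
    · intro t ht
      rw [hint] at ht
      exact (((aux_g_hasDeriv t).log (hgpos t ht).ne')).hasDerivWithinAt
    · intro t ht
      rw [hint] at ht
      exact ((aux_g1_hasDeriv t).div (aux_g_hasDeriv t) (hgpos t ht).ne').hasDerivWithinAt
    · intro t _
      apply div_nonpos_of_nonpos_of_nonneg _ (sq_nonneg _)
      have h3 := Real.sin_sq_add_cos_sq t
      simp only [hgdef]
      nlinarith [sq_nonneg t, sq_nonneg (Real.sin t), sq_nonneg (Real.cos t)]
  -- midpoint
  set m : ℝ := (x + y) / 2 with hmdef
  have hmD : m ∈ D := by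
    constructor
    · simp only [hmdef]; linarith [hx.1, hy.1]
    · simp only [hmdef]; linarith [hx.2, hy.2]
  have half : (0:ℝ) ≤ 1/2 := by norm_num
  have hsum : (1:ℝ)/2 + 1/2 = 1 := by norm_num
  -- h m ^ 2 ≤ h x * h y
  have hineq : h m ^ 2 ≤ h x * h y := by
    have h1 := hconv.2 hx hy half half hsum
    rw [smul_eq_mul, smul_eq_mul, smul_eq_mul, smul_eq_mul] at h1
    have hm' : (1:ℝ)/2 * x + 1/2 * y = m := by rw [hmdef]; ring
    rw [hm'] at h1
    have h2 : Real.log (h m ^ 2) ≤ Real.log (h x * h y) := by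
      rw [Real.log_pow, Real.log_mul (aux_h_pos x).ne' (aux_h_pos y).ne']
      push_cast
      linarith
    exact (Real.log_le_log_iff (pow_pos (aux_h_pos m) 2) (mul_pos (aux_h_pos x) (aux_h_pos y))).mp h2
  -- g x * g y ≤ g m ^ 2
  have gineq : g x * g y ≤ g m ^ 2 := by
    have h1 := hconc.2 hx hy half half hsum
    rw [smul_eq_mul, smul_eq_mul, smul_eq_mul, smul_eq_mul] at h1
    have hm' : (1:ℝ)/2 * x + 1/2 * y = m := by rw [hmdef]; ring
    rw [hm'] at h1
    have h2 : Real.log (g x * g y) ≤ Real.log (g m ^ 2) := by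
      rw [Real.log_pow, Real.log_mul (hgpos x hx).ne' (hgpos y hy).ne']
      push_cast
      linarith
    exact (Real.log_le_log_iff (mul_pos (hgpos x hx) (hgpos y hy))
      (pow_pos (hgpos m hmD) 2)).mp h2
  -- conclude
  calc h m ^ 2 * (g x * g y) ≤ h m ^ 2 * g m ^ 2 :=
        mul_le_mul_of_nonneg_left gineq (sq_nonneg _)
    _ = g m ^ 2 * h m ^ 2 := by ring
    _ ≤ g m ^ 2 * (h x * h y) := mul_le_mul_of_nonneg_left hineq (sq_nonneg _)
end

section
/- Let ν > -1 and let (α_{ν,n})_{n≥1} be a strictly increasing sequence of positive reals with ∑_{n≥1} 1/α_{ν,n}² = 3/(4(ν+1)), and suppose λ_ν(x) = ∏_{n≥1} (1 + x²/α_{ν,n}²) converges for all real x. Then for all x with 0 < x < α_{ν,1}: 1 ≤ λ_ν(x) ≤ ((α_{ν,1}² + x²)/(α_{ν,1}² - x²))^{3α_{ν,1}²/(8(ν+1))}. -/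
open Real Filter Topology

lemma key_ineq_aux {u : ℝ} (h0 : 0 ≤ u) (h1 : u < 1) :
    2 * u ≤ Real.log ((1 + u) / (1 - u)) := by
  have h1u : (0:ℝ) < 1 - u := by linarith
  rw [Real.log_div (by positivity) h1u.ne']
  set g : ℝ → ℝ := fun t => Real.log (1 + t) - Real.log (1 - t) - 2 * t with hg
  have hderiv : ∀ t ∈ Set.Ioo (0:ℝ) u, HasDerivAt g (1 / (1 + t) - -1 / (1 - t) - 2 * 1) t := by
    intro t ht
    have h1t : (0:ℝ) < 1 + t := by linarith [ht.1]
    have h2t : (0:ℝ) < 1 - t := by linarith [ht.2]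
    have hA : HasDerivAt (fun y : ℝ => Real.log (1 + y)) (1 / (1 + t)) t :=
      ((hasDerivAt_id t).const_add 1).log h1t.ne'
    have hB : HasDerivAt (fun y : ℝ => Real.log (1 - y)) (-1 / (1 - t)) t :=
      ((hasDerivAt_id t).const_sub 1).log h2t.ne'
    have hC : HasDerivAt (fun y : ℝ => 2 * y) (2 * 1) t := (hasDerivAt_id t).const_mul 2
    exact (hA.sub hB).sub hC
  have hmono : MonotoneOn g (Set.Icc 0 u) := by
    apply monotoneOn_of_deriv_nonneg (convex_Icc 0 u)
    · have hc1 : ContinuousOn (fun t : ℝ => Real.log (1 + t)) (Set.Icc 0 u) := by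
        apply ContinuousOn.log (by fun_prop)
        intro t ht
        have : (0:ℝ) < 1 + t := by linarith [ht.1]
        exact this.ne'
      have hc2 : ContinuousOn (fun t : ℝ => Real.log (1 - t)) (Set.Icc 0 u) := by
        apply ContinuousOn.log (by fun_prop)
        intro t ht
        have : (0:ℝ) < 1 - t := by linarith [ht.2]
        exact this.ne'
      exact (hc1.sub hc2).sub (by fun_prop)
    · intro t ht
      rw [interior_Icc] at ht
      exact ((hderiv t ht).differentiableAt).differentiableWithinAt
    · intro t ht
      rw [interior_Icc] at ht
      rw [(hderiv t ht).deriv]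
      have h1t : (0:ℝ) < 1 + t := by linarith [ht.1]
      have h2t : (0:ℝ) < 1 - t := by linarith [ht.2]
      have e : 1 / (1 + t) - -1 / (1 - t) - 2 * 1 = 2 * t ^ 2 / ((1 + t) * (1 - t)) := by
        field_simp
        ring
      rw [e]
      positivity
  have h0m : g 0 ≤ g u := hmono ⟨le_refl 0, h0⟩ ⟨h0, le_refl u⟩ h0
  have hg0 : g 0 = 0 := by simp [hg]
  have := hg0 ▸ h0m
  simp only [hg] at this
  linarith

theorem stmt_15 (ν : ℝ) (hν : -1 < ν) (a : ℕ → ℝ)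
    (ha_pos : ∀ n, 0 < a n) (ha_mono : StrictMono a)
    (ha_sum : ∑' n, 1 / (a n) ^ 2 = 3 / (4 * (ν + 1)))
    (hmul : ∀ x : ℝ, Multipliable fun n => 1 + x ^ 2 / (a n) ^ 2)
    (x : ℝ) (hx₀ : 0 < x) (hx₁ : x < a 0) :
    1 ≤ ∏' n, (1 + x ^ 2 / (a n) ^ 2) ∧
      ∏' n, (1 + x ^ 2 / (a n) ^ 2) ≤
        (((a 0) ^ 2 + x ^ 2) / ((a 0) ^ 2 - x ^ 2)) ^ (3 * (a 0) ^ 2 / (8 * (ν + 1))) := by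
  have hν1 : (0:ℝ) < ν + 1 := by linarith
  have ha0 : 0 < a 0 := ha_pos 0
  have hx2 : x ^ 2 < (a 0) ^ 2 := by nlinarith
  have hterm : ∀ n, (1:ℝ) ≤ 1 + x ^ 2 / (a n) ^ 2 := fun n =>
    le_add_of_nonneg_right (by have := ha_pos n; positivity)
  have hP := (hmul x).hasProd
  set P := ∏' n, (1 + x ^ 2 / (a n) ^ 2) with hPdef
  have hP1 : 1 ≤ P := by
    refine ge_of_tendsto' hP fun s => ?_
    calc (1:ℝ) = ∏ _i ∈ s, 1 := by simp
      _ ≤ ∏ i ∈ s, (1 + x ^ 2 / (a i) ^ 2) :=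
          Finset.prod_le_prod (fun i _ => zero_le_one) (fun i _ => hterm i)
  have hP0 : (0:ℝ) < P := lt_of_lt_of_le one_pos hP1
  refine ⟨hP1, ?_⟩
  -- log of product is sum of logs
  have hlog : HasSum (fun n => Real.log (1 + x ^ 2 / (a n) ^ 2)) (Real.log P) := by
    have h2 : Tendsto (fun s : Finset ℕ => Real.log (∏ i ∈ s, (1 + x ^ 2 / (a i) ^ 2)))
        atTop (𝓝 (Real.log P)) := (Real.continuousAt_log hP0.ne').tendsto.comp hP
    exact h2.congr fun s =>
      Real.log_prod fun i _ => (lt_of_lt_of_le one_pos (hterm i)).ne'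
  have hsum1 : Summable fun n => 1 / (a n) ^ 2 := by
    by_contra h
    rw [tsum_eq_zero_of_not_summable h] at ha_sum
    have : (0:ℝ) < 3 / (4 * (ν + 1)) := by positivity
    linarith
  have hsum2 : Summable fun n => x ^ 2 * (1 / (a n) ^ 2) := hsum1.mul_left _
  have hle : Real.log P ≤ x ^ 2 * (3 / (4 * (ν + 1))) := by
    have hpt : ∀ n, Real.log (1 + x ^ 2 / (a n) ^ 2) ≤ x ^ 2 * (1 / (a n) ^ 2) := by
      intro n
      have h0 : (0:ℝ) < 1 + x ^ 2 / (a n) ^ 2 := lt_of_lt_of_le one_pos (hterm n)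
      have h := Real.log_le_sub_one_of_pos h0
      have e : x ^ 2 / (a n) ^ 2 = x ^ 2 * (1 / (a n) ^ 2) := by ring
      linarith [e ▸ h]
    calc Real.log P = ∑' n, Real.log (1 + x ^ 2 / (a n) ^ 2) := hlog.tsum_eq.symm
      _ ≤ ∑' n, x ^ 2 * (1 / (a n) ^ 2) := Summable.tsum_le_tsum hpt hlog.summable hsum2
      _ = x ^ 2 * ∑' n, 1 / (a n) ^ 2 := tsum_mul_left
      _ = x ^ 2 * (3 / (4 * (ν + 1))) := by rw [ha_sum]
  -- key inequality
  set R := ((a 0) ^ 2 + x ^ 2) / ((a 0) ^ 2 - x ^ 2) with hRdef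
  have hsub : (0:ℝ) < (a 0) ^ 2 - x ^ 2 := by linarith
  have hR : (0:ℝ) < R := by positivity
  have hu0 : (0:ℝ) ≤ x ^ 2 / (a 0) ^ 2 := by positivity
  have hu1 : x ^ 2 / (a 0) ^ 2 < 1 := (div_lt_one (by positivity)).mpr hx2
  have hkey := key_ineq_aux hu0 hu1
  have hratio : (1 + x ^ 2 / (a 0) ^ 2) / (1 - x ^ 2 / (a 0) ^ 2) = R := by
    rw [hRdef]
    field_simp
  rw [hratio] at hkey
  have hcoef : (0:ℝ) < 3 * (a 0) ^ 2 / (8 * (ν + 1)) := by positivity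
  have hfinal : Real.log P ≤ 3 * (a 0) ^ 2 / (8 * (ν + 1)) * Real.log R := by
    have e1 : 3 * (a 0) ^ 2 / (8 * (ν + 1)) * (2 * (x ^ 2 / (a 0) ^ 2))
        = x ^ 2 * (3 / (4 * (ν + 1))) := by
      field_simp
      ring
    have := mul_le_mul_of_nonneg_left hkey hcoef.le
    linarith [e1 ▸ this]
  rw [Real.rpow_def_of_pos hR]
  calc P = Real.exp (Real.log P) := (Real.exp_log hP0).symm
    _ ≤ Real.exp (Real.log R * (3 * (a 0) ^ 2 / (8 * (ν + 1)))) :=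
        Real.exp_le_exp.mpr (by rw [mul_comm]; exact hfinal)
end
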